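/- arXiv:2505.18868 — 3 statements merged into one kernel-verified Lean document; each statement's English description precedes it below -/
import Mathlib

section
/- Let f ∈ ℂ{x,y} be reduced and let ω ∈ Ω¹ = ℂ{x,y}dx + ℂ{x,y}dy. Then there exists g ∈ ℂ{x,y} with gcd(g,f) = 1 and gω ∈ F(f) := {p·df + f·η : p ∈ ℂ{x,y}, η ∈ Ω¹} if and only if ω ∧ df = h·f·dx∧dy for some h ∈ ℂ{x,y}. -/
open MvPowerSeries

noncomputable section
set_option maxHeartbeats 1000000

/-- `ℂ{x,y}`, modeled as formal power series in two variables. -/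
abbrev PS := MvPowerSeries (Fin 2) ℂ

/-- Formal partial derivative with respect to variable `i`. -/
noncomputable def pd (i : Fin 2) (f : PS) : PS :=
  fun m => ((m i : ℂ) + 1) * MvPowerSeries.coeff (m + Finsupp.single i 1) f

/-- The pair `(f_x, f_y)` representing the differential `df = f_x dx + f_y dy`;
a 1-form `A dx + B dy` is modeled as the pair `(A, B)`. -/
noncomputable def dd (f : PS) : PS × PS := (pd 0 f, pd 1 f)

/-- `(A dx + B dy) ∧ (C dx + D dy) = (A D - B C) dx∧dy`, recorded by its coefficient. -/
def wedge (ω η : PS × PS) : PS := ω.1 * η.2 - ω.2 * η.1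

/-- The Saito module `S(f)`: 1-forms `ω` with `ω ∧ df = h·f·dx∧dy` for some `h`. -/
def SaitoSet (f : PS) : Set (PS × PS) := {ω | ∃ h : PS, wedge ω (dd f) = h * f}

/-- `F(f) = ℂ{x,y}·df + f·Ω¹`. -/
def FSet (f : PS) : Set (PS × PS) := {ω | ∃ (p : PS) (η : PS × PS), ω = p • dd f + f • η}


instance : IsDomain PS := NoZeroDivisors.to_isDomain _

namespace SaitoAux

abbrev V : Type := PowerSeries ℂ
abbrev T : Type := PowerSeries V

def fs (a j : ℕ) : Fin 2 →₀ ℕ := Finsupp.single 0 a + Finsupp.single 1 j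

@[simp] lemma fs_apply0 (a j : ℕ) : fs a j 0 = a := by simp [fs]
@[simp] lemma fs_apply1 (a j : ℕ) : fs a j 1 = j := by
  simp [fs, Finsupp.single_apply]

lemma fs_add (a b j k : ℕ) : fs a j + fs b k = fs (a+b) (j+k) := by
  ext i
  fin_cases i <;> simp

lemma eq_fs (m : Fin 2 →₀ ℕ) : m = fs (m 0) (m 1) := by
  ext i
  fin_cases i <;> simp

lemma fs_inj {a j b k : ℕ} (h : fs a j = fs b k) : a = b ∧ j = k := by
  constructor
  · have := congrArg (fun m => m 0) h; simpa using this
  · have := congrArg (fun m => m 1) h; simpa using this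

/-- double coefficient -/
def c2 (a j : ℕ) (F : T) : ℂ := PowerSeries.coeff (R := ℂ) a (PowerSeries.coeff (R := V) j F)

def toT (p : PS) : T := PowerSeries.mk fun j => PowerSeries.mk fun a => MvPowerSeries.coeff (fs a j) p

def toR (F : T) : PS := fun m => c2 (m 0) (m 1) F

@[simp] lemma c2_toT (p : PS) (a j : ℕ) : c2 a j (toT p) = MvPowerSeries.coeff (fs a j) p := by
  simp [c2, toT]

@[simp] lemma coeff_toR (F : T) (m : Fin 2 →₀ ℕ) :
    MvPowerSeries.coeff m (toR F) = c2 (m 0) (m 1) F := rfl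

lemma toT_mul (p q : PS) : toT (p * q) = toT p * toT q := by
  apply PowerSeries.ext; intro j
  apply PowerSeries.ext; intro a
  have lhs : PowerSeries.coeff (R := ℂ) a (PowerSeries.coeff (R := V) j (toT (p*q)))
      = ∑ x ∈ Finset.HasAntidiagonal.antidiagonal (fs a j), MvPowerSeries.coeff x.1 p * MvPowerSeries.coeff x.2 q := by
    simp [toT, MvPowerSeries.coeff_mul]
  rw [lhs, PowerSeries.coeff_mul, map_sum]
  have rhs : ∀ y ∈ Finset.HasAntidiagonal.antidiagonal j,
      PowerSeries.coeff (R := ℂ) a (PowerSeries.coeff (R := V) y.1 (toT p) * PowerSeries.coeff (R := V) y.2 (toT q))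
      = ∑ z ∈ Finset.HasAntidiagonal.antidiagonal a, MvPowerSeries.coeff (fs z.1 y.1) p * MvPowerSeries.coeff (fs z.2 y.2) q := by
    intro y _
    rw [PowerSeries.coeff_mul]
    apply Finset.sum_congr rfl
    intro z _
    simp [toT]
  rw [Finset.sum_congr rfl rhs, ← Finset.sum_product']
  apply Finset.sum_nbij' (i := fun yz => ((yz.1 1, yz.2 1), (yz.1 0, yz.2 0)))
    (j := fun yz : (ℕ × ℕ) × ℕ × ℕ => (fs yz.2.1 yz.1.1, fs yz.2.2 yz.1.2))
  · intro uv huv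
    rw [Finset.HasAntidiagonal.mem_antidiagonal] at huv
    simp only [Finset.mem_product, Finset.HasAntidiagonal.mem_antidiagonal]
    constructor
    · have := congrArg (fun m => m 1) huv; simpa using this
    · have := congrArg (fun m => m 0) huv; simpa using this
  · intro yz hyz
    simp only [Finset.mem_product, Finset.HasAntidiagonal.mem_antidiagonal] at hyz
    rw [Finset.HasAntidiagonal.mem_antidiagonal, fs_add, hyz.1, hyz.2]
  · intro uv huv
    have h1 := (eq_fs uv.1).symm
    have h2 := (eq_fs uv.2).symm
    simp only [Prod.ext_iff]
    exact ⟨h1, h2⟩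
  · intro yz hyz
    simp
  · intro uv huv
    simp only [← eq_fs]

lemma toT_add (p q : PS) : toT (p + q) = toT p + toT q := by
  apply PowerSeries.ext; intro j
  apply PowerSeries.ext; intro a
  simp [toT]

lemma toT_one : toT 1 = 1 := by
  apply PowerSeries.ext; intro j
  apply PowerSeries.ext; intro a
  simp only [toT, PowerSeries.coeff_mk, PowerSeries.coeff_one]
  rw [MvPowerSeries.coeff_one]
  by_cases hj : j = 0
  · subst hj
    by_cases ha : a = 0
    · subst ha
      simp [show fs 0 0 = 0 by ext i; fin_cases i <;> simp]
    · rw [if_neg, if_pos rfl, PowerSeries.coeff_one, if_neg ha]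
      intro h
      exact ha (by simpa using congrArg (fun m => m 0) h)
  · rw [if_neg, if_neg hj, map_zero]
    intro h
    exact hj (by simpa using congrArg (fun m => m 1) h)

/-- The ring equivalence `PS ≃+* T`. -/
def Phi : PS ≃+* T :=
  { toFun := toT
    invFun := toR
    left_inv := by
      intro p
      apply MvPowerSeries.ext; intro m
      rw [coeff_toR, c2_toT, ← eq_fs]
    right_inv := by
      intro F
      apply PowerSeries.ext; intro j
      apply PowerSeries.ext; intro a
      simp [toT, c2]
    map_mul' := toT_mul
    map_add' := toT_add }

@[simp] lemma c2_Phi (p : PS) (a j : ℕ) : c2 a j (Phi p) = MvPowerSeries.coeff (fs a j) p := c2_toT p a j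

lemma c2_ext {F G : T} (h : ∀ a j, c2 a j F = c2 a j G) : F = G := by
  apply PowerSeries.ext; intro j
  apply PowerSeries.ext; intro a
  exact h a j

@[simp] lemma c2_zero (a j : ℕ) : c2 a j 0 = 0 := by simp [c2]

lemma c2_add (a j : ℕ) (F G : T) : c2 a j (F + G) = c2 a j F + c2 a j G := by simp [c2]

lemma c2_sub (a j : ℕ) (F G : T) : c2 a j (F - G) = c2 a j F - c2 a j G := by simp [c2]

lemma c2_mul (F G : T) (a j : ℕ) :
    c2 a j (F * G) = ∑ y ∈ Finset.HasAntidiagonal.antidiagonal j, ∑ z ∈ Finset.HasAntidiagonal.antidiagonal a,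
      c2 z.1 y.1 F * c2 z.2 y.2 G := by
  simp only [c2, PowerSeries.coeff_mul, map_sum]

/-- units from constant coefficient, one level -/
lemma isUnit_ps {S : Type*} [CommRing S] (φ : PowerSeries S)
    (h : IsUnit (PowerSeries.constantCoeff (R := S) φ)) : IsUnit φ := by
  obtain ⟨u, hu⟩ := h
  exact IsUnit.of_mul_eq_one (PowerSeries.invOfUnit φ u)
    (PowerSeries.mul_invOfUnit φ u hu.symm)

lemma isUnit_T (F : T) (h : c2 0 0 F ≠ 0) : IsUnit F := by
  apply isUnit_ps
  apply isUnit_ps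
  rw [isUnit_iff_ne_zero]
  simpa [c2, PowerSeries.coeff_zero_eq_constantCoeff] using h

lemma c2_ne_zero_of_isUnit {F : T} (h : IsUnit F) : c2 0 0 F ≠ 0 := by
  have h1 := PowerSeries.isUnit_constantCoeff F h
  have h2 := PowerSeries.isUnit_constantCoeff _ h1
  rw [isUnit_iff_ne_zero] at h2
  simpa [c2, PowerSeries.coeff_zero_eq_constantCoeff] using h2

/-- the element x -/
def xT : T := PowerSeries.C (R := V) PowerSeries.X

lemma c2_xT_C_mul (G : T) (a j : ℕ) :
    c2 (a+1) j (xT * G) = c2 a j G := by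
  simp [c2, xT, PowerSeries.coeff_C_mul, PowerSeries.coeff_succ_X_mul]

lemma c2_xT_C_mul_zero (G : T) (j : ℕ) : c2 0 j (xT * G) = 0 := by
  simp [c2, xT, PowerSeries.coeff_C_mul, PowerSeries.coeff_zero_eq_constantCoeff]

lemma xT_dvd_iff (F : T) : xT ∣ F ↔ ∀ j, c2 0 j F = 0 := by
  constructor
  · rintro ⟨G, rfl⟩ j
    exact c2_xT_C_mul_zero G j
  · intro h
    refine ⟨PowerSeries.mk fun j => PowerSeries.mk fun a => c2 (a+1) j F, ?_⟩
    apply c2_ext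
    intro a j
    cases a with
    | zero => rw [c2_xT_C_mul_zero, h j]
    | succ a => rw [c2_xT_C_mul]; simp [c2]

def rho : T →+* PowerSeries ℂ := PowerSeries.map (PowerSeries.constantCoeff (R := ℂ))

lemma coeff_rho (F : T) (j : ℕ) : PowerSeries.coeff (R := ℂ) j (rho F) = c2 0 j F := by
  simp [rho, c2, PowerSeries.coeff_map, PowerSeries.coeff_zero_eq_constantCoeff]

lemma rho_eq_zero_iff (F : T) : rho F = 0 ↔ ∀ j, c2 0 j F = 0 := by
  constructor
  · intro h j
    rw [← coeff_rho, h, map_zero]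
  · intro h
    apply PowerSeries.ext; intro j
    rw [coeff_rho, h, map_zero]

lemma xT_dvd_iff' (F : T) : xT ∣ F ↔ rho F = 0 := by
  rw [xT_dvd_iff, rho_eq_zero_iff]

lemma xT_ne_zero : (xT : T) ≠ 0 := by
  intro h
  have : c2 1 0 xT = 0 := by rw [h]; simp
  rw [c2, xT] at this
  simp [PowerSeries.coeff_C] at this

lemma xT_prime : Prime (xT : T) := by
  refine ⟨xT_ne_zero, ?_, ?_⟩
  · intro h
    exact c2_ne_zero_of_isUnit h (by simp [c2, xT, PowerSeries.coeff_zero_eq_constantCoeff])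
  · intro a b hab
    rw [xT_dvd_iff', map_mul] at hab
    rcases mul_eq_zero.mp hab with h | h
    · exact Or.inl ((xT_dvd_iff' a).mpr h)
    · exact Or.inr ((xT_dvd_iff' b).mpr h)

/-- Weierstrass division coefficients -/
def wc (n : ℕ) (E H : T) : ℕ → ℕ → ℂ
  | a, j =>
    c2 a (j+n) H + ∑ y ∈ Finset.HasAntidiagonal.antidiagonal (j+n), ∑ z ∈ Finset.HasAntidiagonal.antidiagonal a,
      (if h : z.1 < a then wc n E H z.1 y.1 else 0) * c2 z.2 y.2 E
  termination_by a _ => a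
  decreasing_by exact h

def wQ (n : ℕ) (E H : T) : T := PowerSeries.mk fun j => PowerSeries.mk fun a => wc n E H a j

@[simp] lemma c2_wQ (n : ℕ) (E H : T) (a j : ℕ) : c2 a j (wQ n E H) = wc n E H a j := by
  simp [c2, wQ]

lemma wc_spec (n : ℕ) (E H : T) (hE : ∀ j, c2 0 j E = 0) (a j : ℕ) :
    wc n E H a j = c2 a (j+n) H + c2 a (j+n) (wQ n E H * E) := by
  rw [wc, c2_mul]
  congr 1
  apply Finset.sum_congr rfl
  intro y _
  apply Finset.sum_congr rfl
  intro z hz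
  rw [Finset.HasAntidiagonal.mem_antidiagonal] at hz
  by_cases h : z.1 < a
  · rw [dif_pos h, c2_wQ]
  · have : z.1 = a := le_antisymm (by omega) (not_lt.mp h)
    have hz2 : z.2 = 0 := by omega
    rw [dif_neg h, hz2, hE, mul_zero, mul_zero]

lemma c2_mul_X_pow (Q : T) (n a j : ℕ) :
    c2 a (j + n) (Q * (PowerSeries.X : T) ^ n) = c2 a j Q := by
  simp [c2, PowerSeries.coeff_mul_X_pow]

lemma wdiv (n : ℕ) (E H : T) (hE : ∀ j, c2 0 j E = 0) :
    ∃ Q Rr : T, H = Q * ((PowerSeries.X : T) ^ n - E) + Rr ∧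
      (∀ j, n ≤ j → PowerSeries.coeff (R := V) j Rr = 0) := by
  set Q := wQ n E H with hQ
  refine ⟨Q, H - Q * ((PowerSeries.X : T) ^ n - E), by ring, ?_⟩
  intro j hj
  obtain ⟨j', rfl⟩ := Nat.exists_eq_add_of_le hj
  apply PowerSeries.ext; intro a
  have expand : H - Q * ((PowerSeries.X : T) ^ n - E)
      = H + Q * E - Q * (PowerSeries.X : T) ^ n := by ring
  rw [expand]
  have : c2 a (n + j') (H + Q * E - Q * (PowerSeries.X : T) ^ n) = 0 := by
    rw [c2_sub, c2_add, show n + j' = j' + n from add_comm _ _, c2_mul_X_pow, c2_wQ,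
      wc_spec n E H hE a j']
    ring
  simpa [c2] using this

lemma wuniq (n : ℕ) (E : T) (hE : ∀ j, c2 0 j E = 0) (Q Rr : T)
    (h : Q * ((PowerSeries.X : T) ^ n - E) + Rr = 0)
    (hR : ∀ j, n ≤ j → PowerSeries.coeff (R := V) j Rr = 0) : Q = 0 ∧ Rr = 0 := by
  have hc2R : ∀ a j, n ≤ j → c2 a j Rr = 0 := by
    intro a j hj
    rw [c2, hR j hj, map_zero]
  have hQ : ∀ a, ∀ j, c2 a j Q = 0 := by
    intro a
    induction a using Nat.strong_induction_on with
    | _ a ih =>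
      intro j
      have h0 : c2 a (j + n) (Q * ((PowerSeries.X : T) ^ n - E) + Rr) = 0 := by
        rw [h]; simp
      rw [c2_add, hc2R a (j+n) (by omega), add_zero, mul_sub, c2_sub, c2_mul_X_pow] at h0
      have hQE : c2 a (j + n) (Q * E) = 0 := by
        rw [c2_mul]
        apply Finset.sum_eq_zero
        intro y _
        apply Finset.sum_eq_zero
        intro z hz
        rw [Finset.HasAntidiagonal.mem_antidiagonal] at hz
        by_cases hlt : z.1 < a
        · rw [ih z.1 hlt, zero_mul]
        · have hz2 : z.2 = 0 := by omega
          rw [hz2, hE, mul_zero]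
      rw [hQE] at h0
      simpa using h0
  have hQz : Q = 0 := by
    apply c2_ext
    intro a j
    rw [hQ a j, c2_zero]
  refine ⟨hQz, ?_⟩
  rw [hQz, zero_mul, zero_add] at h
  exact h



lemma coeff_rho_pow_n (n : ℕ) : rho ((PowerSeries.X : T)^n) = (PowerSeries.X : PowerSeries ℂ)^n := by
  rw [map_pow, rho, PowerSeries.map_X]

lemma prep (F : T) (hx : ¬ xT ∣ F) :
    ∃ (n : ℕ) (w Rr : T), IsUnit w ∧ (∀ j, c2 0 j Rr = 0) ∧
      (∀ j, n ≤ j → PowerSeries.coeff (R := V) j Rr = 0) ∧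
      F = w * ((PowerSeries.X : T)^n - Rr) ∧ (¬ IsUnit F → 1 ≤ n) := by
  classical
  rw [xT_dvd_iff] at hx
  push_neg at hx
  have hex : ∃ j, c2 0 j F ≠ 0 := hx
  set n := Nat.find hex with hn
  have hn_spec : c2 0 n F ≠ 0 := Nat.find_spec hex
  have hn_min : ∀ q, q < n → c2 0 q F = 0 := by
    intro q hq
    by_contra hne
    exact Nat.find_min hex hq hne
  -- u₀ is a unit of V
  have hu0 : IsUnit (PowerSeries.coeff (R := V) n F) := by
    apply isUnit_ps
    rw [isUnit_iff_ne_zero]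
    simpa [c2, PowerSeries.coeff_zero_eq_constantCoeff] using hn_spec
  obtain ⟨u, hu⟩ := hu0
  set F' : T := PowerSeries.C (R := V) ((↑u⁻¹ : V)) * F with hF'
  have hcF' : ∀ j, PowerSeries.coeff (R := V) j F' = (↑u⁻¹ : V) * PowerSeries.coeff (R := V) j F := by
    intro j; simp [hF', PowerSeries.coeff_C_mul]
  have hc2F' : ∀ q, q < n → c2 0 q F' = 0 := by
    intro q hq
    rw [c2, hcF', PowerSeries.coeff_mul]
    apply Finset.sum_eq_zero
    intro z hz
    rw [Finset.HasAntidiagonal.mem_antidiagonal] at hz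
    have hz2 : z.2 = 0 := by omega
    have hz1 : z.1 = 0 := by omega
    rw [hz1, hz2]
    have : PowerSeries.coeff (R := ℂ) 0 (PowerSeries.coeff (R := V) q F) = 0 := hn_min q hq
    rw [this, mul_zero]
  have hcF'n : PowerSeries.coeff (R := V) n F' = 1 := by
    rw [hcF', ← hu, Units.inv_mul]
  set U : T := PowerSeries.mk fun j => PowerSeries.coeff (R := V) (n + j) F' with hUdef
  set P : T := PowerSeries.mk fun j => if j < n then PowerSeries.coeff (R := V) j F' else 0 with hPdef
  have hsplit : F' = P + (PowerSeries.X : T)^n * U := by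
    apply PowerSeries.ext; intro j
    rw [map_add, PowerSeries.coeff_X_pow_mul']
    by_cases hj : j < n
    · rw [if_neg (not_le.mpr hj), hPdef]
      simp [hj]
    · push_neg at hj
      rw [if_pos hj, hPdef, hUdef]
      simp only [PowerSeries.coeff_mk, if_neg (not_lt.mpr hj), zero_add]
      rw [Nat.add_sub_cancel' hj]
  have hUunit : IsUnit U := by
    apply isUnit_ps
    have : PowerSeries.constantCoeff (R := V) U = PowerSeries.coeff (R := V) n F' := by
      rw [hUdef, ← PowerSeries.coeff_zero_eq_constantCoeff]
      simp
    rw [this, hcF'n]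
    exact isUnit_one
  obtain ⟨v, hv⟩ := hUunit
  set E1 : T := -((↑v⁻¹ : T) * P) with hE1def
  have hE1 : ∀ j, c2 0 j E1 = 0 := by
    intro j
    have hneg : c2 0 j E1 = - c2 0 j ((↑v⁻¹ : T) * P) := by
      rw [hE1def]; simp [c2]
    rw [hneg, neg_eq_zero]
    have goal : c2 0 j ((↑v⁻¹ : T) * P) = 0 := by
      rw [c2_mul]
      apply Finset.sum_eq_zero
      intro y _
      apply Finset.sum_eq_zero
      intro z hz
      rw [Finset.HasAntidiagonal.mem_antidiagonal] at hz
      have hz2 : z.2 = 0 := by omega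
      have hz1 : z.1 = 0 := by omega
      rw [hz1, hz2]
      have hP0 : c2 0 y.2 P = 0 := by
        rw [hPdef, c2]
        simp only [PowerSeries.coeff_mk]
        by_cases hy2 : y.2 < n
        · have := hc2F' y.2 hy2
          rw [if_pos hy2]
          exact this
        · rw [if_neg hy2, map_zero]
      rw [hP0, mul_zero]
    exact goal
  have hFw1 : F = (PowerSeries.C (R := V) (↑u : V) * ↑v) * ((PowerSeries.X : T)^n - E1) := by
    have h1 : (PowerSeries.C (R := V) (↑u : V)) * F' = F := by
      rw [hF', ← mul_assoc, ← map_mul, Units.mul_inv, map_one, one_mul]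
    have hvv : (↑v : T) * (↑v⁻¹ : T) = 1 := v.mul_inv
    rw [hE1def]
    linear_combination (-1 : T) * h1 + PowerSeries.C (R := V) (↑u : V) * hsplit
      - (PowerSeries.C (R := V) (↑u : V) * (PowerSeries.X : T)^n) * hv
      - (PowerSeries.C (R := V) (↑u : V) * P) * hvv
  -- step 2: divide X^n by (X^n - E1)
  obtain ⟨Q, Rr, hdiv, hRhigh⟩ := wdiv n E1 ((PowerSeries.X : T)^n) hE1
  have hrho : (PowerSeries.X : PowerSeries ℂ)^n = rho Q * (PowerSeries.X : PowerSeries ℂ)^n + rho Rr := by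
    have := congrArg rho hdiv
    rw [map_add, map_mul, map_sub, coeff_rho_pow_n, (rho_eq_zero_iff E1).mpr hE1, sub_zero] at this
    exact this
  have hRr0 : ∀ j, c2 0 j Rr = 0 := by
    intro j
    by_cases hj : j < n
    · have := congrArg (PowerSeries.coeff (R := ℂ) j) hrho
      rw [map_add, PowerSeries.coeff_X_pow, if_neg (by omega), PowerSeries.coeff_mul_X_pow',
        if_neg (by omega), coeff_rho] at this
      simpa using this.symm
    · push_neg at hj
      rw [c2, hRhigh j hj, map_zero]
  have hQ1 : c2 0 0 Q = 1 := by
    have hRrho : rho Rr = 0 := (rho_eq_zero_iff Rr).mpr hRr0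
    rw [hRrho, add_zero] at hrho
    have := congrArg (PowerSeries.coeff (R := ℂ) n) hrho
    rw [PowerSeries.coeff_X_pow, if_pos rfl, PowerSeries.coeff_mul_X_pow', if_pos (by omega)] at this
    rw [show n - n = 0 from by omega, coeff_rho] at this
    exact this.symm
  have hQunit : IsUnit Q := isUnit_T Q (by rw [hQ1]; exact one_ne_zero)
  obtain ⟨q, hq⟩ := hQunit
  refine ⟨n, PowerSeries.C (R := V) (↑u : V) * ↑v * ↑q⁻¹, Rr, ?_, hRr0, hRhigh, ?_, ?_⟩
  · exact ((u.isUnit.map (PowerSeries.C (R := V))).mul v.isUnit).mul q⁻¹.isUnit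
  · have hXn : (PowerSeries.X : T)^n - Rr = Q * ((PowerSeries.X : T)^n - E1) := by
      linear_combination hdiv
    have hq1 : (↑q⁻¹ : T) * Q = 1 := by rw [← hq]; exact q.inv_mul
    linear_combination hFw1 - (PowerSeries.C (R := V) (↑u : V) * ↑v * ↑q⁻¹) * hXn
      - (PowerSeries.C (R := V) (↑u : V) * ↑v * ((PowerSeries.X : T)^n - E1)) * hq1
  · intro hF
    by_contra hn0
    apply hF
    have hn0' : n = 0 := by omega
    have h1 : c2 0 0 ((PowerSeries.X : T)^n - E1) ≠ 0 := by
      rw [c2_sub, hE1 0, sub_zero, hn0', pow_zero]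
      simp [c2]
    have h2 := isUnit_T _ h1
    rw [hFw1]
    exact ((u.isUnit.map (PowerSeries.C (R := V))).mul v.isUnit).mul h2

/-! ### Polynomials over V and distinguished primes -/

def Th : Polynomial V →+* T := Polynomial.coeToPowerSeries.ringHom

lemma coeff_Th (p : Polynomial V) (j : ℕ) : PowerSeries.coeff (R := V) j (Th p) = p.coeff j :=
  Polynomial.coeff_coe p j

lemma Th_injective : Function.Injective Th := by
  intro p q h
  apply Polynomial.ext
  intro k
  rw [← coeff_Th, ← coeff_Th, h]

def sig : Polynomial V →+* Polynomial ℂ := Polynomial.mapRingHom (PowerSeries.constantCoeff (R := ℂ))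

lemma coeff_sig (p : Polynomial V) (k : ℕ) :
    (sig p).coeff k = PowerSeries.constantCoeff (R := ℂ) (p.coeff k) := by
  simp [sig, Polynomial.coeff_map]

/-- Key lemma: a distinguished prime polynomial gives a prime power series. -/
lemma theta_distinguished_prime (P : Polynomial V) (hmon : P.Monic) (d : ℕ)
    (hd : P.natDegree = d) (hd1 : 1 ≤ d)
    (hlow : ∀ j, j < d → PowerSeries.constantCoeff (R := ℂ) (P.coeff j) = 0)
    (hprime : Prime P) : Prime (Th P) := by
  set E : T := (PowerSeries.X : T)^d - Th P with hEdef
  have hThP : Th P = (PowerSeries.X : T)^d - E := by rw [hEdef]; ring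
  have hEhigh : ∀ j, d ≤ j → PowerSeries.coeff (R := V) j E = 0 := by
    intro j hj
    rw [hEdef, map_sub, coeff_Th, PowerSeries.coeff_X_pow]
    rcases eq_or_lt_of_le hj with h | h
    · rw [if_pos h.symm, ← h, ← hd]
      have : P.coeff P.natDegree = 1 := hmon
      rw [this]; ring
    · rw [if_neg (by omega), Polynomial.coeff_eq_zero_of_natDegree_lt (by omega)]
      ring
  have hE0 : ∀ j, c2 0 j E = 0 := by
    intro j
    by_cases hj : j < d
    · rw [hEdef, c2_sub]
      have h1 : c2 0 j ((PowerSeries.X : T)^d) = 0 := by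
        rw [c2, PowerSeries.coeff_X_pow, if_neg (by omega : ¬ j = d), map_zero]
      have h2 : c2 0 j (Th P) = 0 := by
        rw [c2, coeff_Th, PowerSeries.coeff_zero_eq_constantCoeff]
        exact hlow j hj
      rw [h1, h2]; ring
    · rw [c2, hEhigh j (by omega), map_zero]
  constructor
  · intro h0
    have : PowerSeries.coeff (R := V) d (Th P) = 1 := by
      rw [coeff_Th, ← hd]; exact hmon
    rw [h0, map_zero] at this
    exact one_ne_zero this.symm
  constructor
  · intro hunit
    apply c2_ne_zero_of_isUnit hunit
    rw [c2, coeff_Th, PowerSeries.coeff_zero_eq_constantCoeff]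
    exact hlow 0 (by omega)
  · rintro a b ⟨k, hk⟩
    obtain ⟨Qa, ra, hae, hahigh⟩ := wdiv d E a hE0
    obtain ⟨Qb, rb, hbe, hbhigh⟩ := wdiv d E b hE0
    set M : T := k - Qa * b - Qb * a + Qa * Qb * ((PowerSeries.X : T)^d - E) with hM
    have hrr : ra * rb = (Th P) * M := by
      have ha' : ra = a - Qa * ((PowerSeries.X : T)^d - E) := by linear_combination -hae
      have hb' : rb = b - Qb * ((PowerSeries.X : T)^d - E) := by linear_combination -hbe
      rw [hThP] at hk ⊢
      rw [hM, ha', hb']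
      linear_combination hk
    -- lift remainders to polynomials
    set rpa : Polynomial V := PowerSeries.trunc d ra with hrpa
    set rpb : Polynomial V := PowerSeries.trunc d rb with hrpb
    have hTa : Th rpa = ra := by
      apply PowerSeries.ext; intro j
      rw [coeff_Th, hrpa, PowerSeries.coeff_trunc]
      by_cases hj : j < d
      · rw [if_pos hj]
      · rw [if_neg hj, hahigh j (by omega)]
    have hTb : Th rpb = rb := by
      apply PowerSeries.ext; intro j
      rw [coeff_Th, hrpb, PowerSeries.coeff_trunc]
      by_cases hj : j < d
      · rw [if_pos hj]
      · rw [if_neg hj, hbhigh j (by omega)]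
    -- polynomial division
    set t : Polynomial V := (rpa * rpb) %ₘ P with ht
    set sq : Polynomial V := (rpa * rpb) /ₘ P with hsq
    have hdiv : t + P * sq = rpa * rpb := Polynomial.modByMonic_add_div _ _
    have hdegt : t.degree < P.degree := Polynomial.degree_modByMonic_lt _ hmon
    have hthigh : ∀ j, d ≤ j → t.coeff j = 0 := by
      intro j hj
      apply Polynomial.coeff_eq_zero_of_degree_lt
      calc t.degree < P.degree := hdegt
        _ ≤ (d : WithBot ℕ) := by
            rw [← hd]
            exact Polynomial.degree_le_natDegree
        _ ≤ (j : WithBot ℕ) := by exact_mod_cast Nat.cast_le.mpr hj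
    have huni : (M - Th sq) * ((PowerSeries.X : T)^d - E) + (- Th t) = 0 := by
      have key : Th t + Th P * Th sq = ra * rb := by
        rw [← map_mul, ← hTa, ← hTb, ← map_mul, ← map_add]
        exact congrArg Th hdiv
      rw [← hThP]
      linear_combination -key - hrr
    obtain ⟨hM0, ht0⟩ := wuniq d E hE0 _ _ huni (by
      intro j hj
      rw [map_neg, coeff_Th, hthigh j hj, neg_zero])
    have ht0' : t = 0 := by
      apply Th_injective
      rw [map_zero]
      exact neg_eq_zero.mp ht0
    have hPdvd : P ∣ rpa * rpb := by
      refine ⟨sq, ?_⟩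
      rw [← hdiv, ht0']
      ring
    rcases hprime.2.2 _ _ hPdvd with h | h
    · left
      obtain ⟨wp, hwp⟩ := h
      refine ⟨Th wp + Qa, ?_⟩
      have : ra = Th P * Th wp := by rw [← map_mul, ← hwp, hTa]
      rw [mul_add, ← this, hae, hThP]
      ring
    · right
      obtain ⟨wp, hwp⟩ := h
      refine ⟨Th wp + Qb, ?_⟩
      have : rb = Th P * Th wp := by rw [← map_mul, ← hwp, hTb]
      rw [mul_add, ← this, hbe, hThP]
      ring

lemma prime_Th_of_prime_dvd (Dp : Polynomial V) (n : ℕ) (hmon : Dp.Monic)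
    (hsig : sig Dp = Polynomial.X ^ n)
    (q : Polynomial V) (hq : Prime q) (hdvd : q ∣ Dp) : Prime (Th q) := by
  obtain ⟨s, hs⟩ := hdvd
  have hlead : q.leadingCoeff * s.leadingCoeff = 1 := by
    have h1 : Dp.leadingCoeff = 1 := hmon
    rw [hs, Polynomial.leadingCoeff_mul] at h1
    exact h1
  have hlu : IsUnit q.leadingCoeff := IsUnit.of_mul_eq_one _ hlead
  obtain ⟨lu, hlu'⟩ := hlu
  set P : Polynomial V := Polynomial.C ((↑lu⁻¹ : V)) * q with hPdef
  have hCunit : IsUnit (Polynomial.C ((↑lu⁻¹ : V))) := Polynomial.isUnit_C.mpr lu⁻¹.isUnit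
  have hassoc : Associated q P := by
    refine ⟨hCunit.unit, ?_⟩
    rw [IsUnit.unit_spec, hPdef]
    ring
  have hPprime : Prime P := hassoc.prime hq
  have hPmon : P.Monic := by
    have : P.leadingCoeff = 1 := by
      rw [hPdef, Polynomial.leadingCoeff_mul, Polynomial.leadingCoeff_C, ← hlu', Units.inv_mul]
    exact this
  set d : ℕ := P.natDegree with hddef
  have hd1 : 1 ≤ d := by
    by_contra hc
    push_neg at hc
    have hd0 : P.natDegree = 0 := by omega
    have : P = 1 := (Polynomial.Monic.natDegree_eq_zero hPmon).mp hd0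
    exact hPprime.not_unit (this ▸ isUnit_one)
  -- sig P = X ^ d
  have hPdvd : P ∣ Dp := (hassoc.symm.dvd).trans ⟨s, hs⟩
  have hsigdvd : sig P ∣ Polynomial.X ^ n := by
    rw [← hsig]
    exact map_dvd sig hPdvd
  obtain ⟨i, hi, hiassoc⟩ := (dvd_prime_pow Polynomial.prime_X n).mp hsigdvd
  have hsigPmon : (sig P).Monic := hPmon.map _
  have hsigP : sig P = Polynomial.X ^ i :=
    Polynomial.eq_of_monic_of_associated hsigPmon (Polynomial.monic_X_pow i) hiassoc
  have hdi : i = d := by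
    have h1 : (sig P).natDegree = d := by
      rw [hddef]
      exact hPmon.natDegree_map _
    rw [hsigP, Polynomial.natDegree_X_pow] at h1
    exact h1
  have hlow : ∀ j, j < d → PowerSeries.constantCoeff (R := ℂ) (P.coeff j) = 0 := by
    intro j hj
    have := congrArg (fun p => Polynomial.coeff p j) hsigP
    simp only [coeff_sig] at this
    rw [this, hdi, Polynomial.coeff_X_pow, if_neg (by omega)]
  have hPTh : Prime (Th P) := theta_distinguished_prime P hPmon d rfl hd1 hlow hPprime
  have : Associated (Th q) (Th P) := by
    refine ⟨(hCunit.unit.map Th.toMonoidHom), ?_⟩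
    have : (Th (Polynomial.C ((↑lu⁻¹ : V)))) = ((hCunit.unit.map Th.toMonoidHom : Tˣ) : T) := rfl
    rw [← this, hPdef, map_mul]
    ring
  exact this.symm.prime hPTh

lemma c2_xT_pow_mul (k : ℕ) (w : T) (a j : ℕ) (h : a < k) : c2 a j (xT^k * w) = 0 := by
  induction k generalizing a w with
  | zero => omega
  | succ k ih =>
    rw [pow_succ, mul_comm (xT^k) xT, mul_assoc]
    cases a with
    | zero => exact c2_xT_C_mul_zero _ j
    | succ a => rw [c2_xT_C_mul]; exact ih _ _ (by omega)

lemma exists_prime_factors_T (z : T) (hz : z ≠ 0) :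
    ∃ (u : T) (l : Multiset T), IsUnit u ∧ (∀ q ∈ l, Prime q) ∧ z = u * l.prod := by
  classical
  -- extract the power of x
  have hex : ∃ a j, c2 a j z ≠ 0 := by
    by_contra hc
    push_neg at hc
    exact hz (c2_ext (by intro a j; rw [hc a j, c2_zero]))
  obtain ⟨a0, j0, h0⟩ := hex
  have hbound : ∀ k, xT^k ∣ z → k ≤ a0 := by
    intro k hk
    by_contra hc
    push_neg at hc
    obtain ⟨w, hw⟩ := hk
    exact h0 (by rw [hw]; exact c2_xT_pow_mul k w a0 j0 hc)
  set a := Nat.findGreatest (fun k => xT^k ∣ z) a0 with hadef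
  have ha1 : xT^a ∣ z := by
    have := Nat.findGreatest_spec (P := fun k => xT^k ∣ z) (m := 0) (Nat.zero_le a0)
      (by show xT^0 ∣ z; rw [pow_zero]; exact one_dvd z)
    exact this
  have ha2 : ¬ xT ∣ (Classical.choose ha1) := by
    intro hdvd
    obtain ⟨w, hw⟩ := hdvd
    have hz' := Classical.choose_spec ha1
    have : xT^(a+1) ∣ z := ⟨w, by rw [hz', hw, pow_succ]; ring⟩
    have hle : a + 1 ≤ a0 := hbound _ this
    have := Nat.le_findGreatest (P := fun k => xT^k ∣ z) hle this
    omega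
  set z' := Classical.choose ha1 with hz'def
  have hzz : z = xT^a * z' := Classical.choose_spec ha1
  have hz'ne : z' ≠ 0 := by
    intro h
    rw [h, mul_zero] at hzz
    exact hz hzz
  by_cases hunit : IsUnit z'
  · refine ⟨z', Multiset.replicate a xT, hunit, ?_, ?_⟩
    · intro q hq
      rw [Multiset.eq_of_mem_replicate hq]
      exact xT_prime
    · rw [Multiset.prod_replicate, hzz]
      ring
  · obtain ⟨n, w, Rr, hw, hRr0, hRhigh, heq, hn1⟩ := prep z' ha2
    have hn : 1 ≤ n := hn1 hunit
    set Dp : Polynomial V := Polynomial.X^n - PowerSeries.trunc n Rr with hDp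
    have hmon : Dp.Monic := Polynomial.monic_X_pow_sub (PowerSeries.degree_trunc_lt Rr n)
    have hThDp : Th Dp = (PowerSeries.X : T)^n - Rr := by
      apply PowerSeries.ext; intro j
      rw [coeff_Th, hDp, Polynomial.coeff_sub, map_sub]
      congr 1
      · rw [Polynomial.coeff_X_pow, PowerSeries.coeff_X_pow]
      · rw [PowerSeries.coeff_trunc]
        by_cases hj : j < n
        · rw [if_pos hj]
        · rw [if_neg hj, hRhigh j (by omega)]
    have hsig : sig Dp = Polynomial.X ^ n := by
      rw [hDp, map_sub]
      have h1 : sig (Polynomial.X ^ n : Polynomial V) = Polynomial.X ^ n := by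
        rw [map_pow]
        simp [sig]
      have h2 : sig (PowerSeries.trunc n Rr) = 0 := by
        apply Polynomial.ext
        intro k
        rw [coeff_sig, PowerSeries.coeff_trunc, Polynomial.coeff_zero]
        by_cases hk : k < n
        · rw [if_pos hk, ← PowerSeries.coeff_zero_eq_constantCoeff_apply]
          exact hRr0 k
        · rw [if_neg hk, map_zero]
      rw [h1, h2, sub_zero]
    have hDpne : Dp ≠ 0 := hmon.ne_zero
    obtain ⟨fl, hflprime, hflassoc⟩ := UniqueFactorizationMonoid.exists_prime_factors Dp hDpne
    obtain ⟨w2, hw2⟩ := hflassoc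
    refine ⟨w * Th (↑w2 : Polynomial V) , fl.map Th + Multiset.replicate a xT, ?_, ?_, ?_⟩
    · exact hw.mul (w2.isUnit.map Th)
    · intro q hq
      rw [Multiset.mem_add] at hq
      rcases hq with hq | hq
      · obtain ⟨q0, hq0mem, rfl⟩ := Multiset.mem_map.mp hq
        refine prime_Th_of_prime_dvd Dp n hmon hsig q0 (hflprime q0 hq0mem) ?_
        exact dvd_trans (Multiset.dvd_prod hq0mem) (Dvd.intro _ hw2)
      · rw [Multiset.eq_of_mem_replicate hq]
        exact xT_prime
    · rw [Multiset.prod_add, Multiset.prod_replicate, Multiset.prod_hom fl Th]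
      have hfl : Th fl.prod * Th (↑w2 : Polynomial V) = Th Dp := by
        rw [← map_mul, hw2]
      rw [hzz, heq, ← hThDp, ← hfl]
      ring

/-! ### Transfer to PS -/

lemma prime_map_symm {p : T} (hp : Prime p) : Prime (Phi.symm p) := by
  refine ⟨?_, ?_, ?_⟩
  · intro h
    apply hp.1
    have := congrArg Phi h
    simpa using this
  · intro h
    apply hp.2.1
    have := h.map Phi
    simpa using this
  · intro a b hab
    have h2 : p ∣ Phi a * Phi b := by
      obtain ⟨c, hc⟩ := hab
      refine ⟨Phi c, ?_⟩
      have := congrArg Phi hc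
      simpa [map_mul] using this
    rcases hp.2.2 _ _ h2 with h | h
    · left
      obtain ⟨c, hc⟩ := h
      refine ⟨Phi.symm c, ?_⟩
      have := congrArg Phi.symm hc
      simpa [map_mul] using this
    · right
      obtain ⟨c, hc⟩ := h
      refine ⟨Phi.symm c, ?_⟩
      have := congrArg Phi.symm hc
      simpa [map_mul] using this

lemma exists_prime_factors_R (z : PS) (hz : z ≠ 0) :
    ∃ (u : PS) (l : Multiset PS), IsUnit u ∧ (∀ q ∈ l, Prime q) ∧ z = u * l.prod := by
  have hz' : Phi z ≠ 0 := by
    intro h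
    apply hz
    have := congrArg Phi.symm h
    simpa using this
  obtain ⟨u, l, hu, hl, heq⟩ := exists_prime_factors_T (Phi z) hz'
  refine ⟨Phi.symm u, l.map Phi.symm, hu.map Phi.symm, ?_, ?_⟩
  · intro q hq
    obtain ⟨q0, hq0, rfl⟩ := Multiset.mem_map.mp hq
    exact prime_map_symm (hl q0 hq0)
  · have := congrArg Phi.symm heq
    rw [map_mul] at this
    simp only [RingEquiv.symm_apply_apply] at this
    rw [this]
    congr 1
    exact (Multiset.prod_hom l (Phi.symm : T ≃+* PS).toRingHom).symm

/-! ### Derivatives -/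

def Dx (F : T) : T := PowerSeries.mk fun j => (PowerSeries.coeff (R := V) j F).derivativeFun

def dFun : V →+ V := AddMonoidHom.mk' PowerSeries.derivativeFun PowerSeries.derivativeFun_add

lemma Dx_mul (F G : T) : Dx (F * G) = F * Dx G + G * Dx F := by
  apply PowerSeries.ext; intro j
  have lhs : PowerSeries.coeff (R := V) j (Dx (F * G))
      = ∑ p ∈ Finset.HasAntidiagonal.antidiagonal j,
          (PowerSeries.coeff (R := V) p.1 F * PowerSeries.coeff (R := V) p.2 G).derivativeFun := by
    rw [Dx, PowerSeries.coeff_mk, PowerSeries.coeff_mul]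
    exact map_sum dFun _ _
  rw [lhs, map_add, PowerSeries.coeff_mul, PowerSeries.coeff_mul]
  have rhs1 : ∀ p : ℕ × ℕ, PowerSeries.coeff (R := V) p.1 F * PowerSeries.coeff (R := V) p.2 (Dx G)
      = PowerSeries.coeff (R := V) p.1 F * (PowerSeries.coeff (R := V) p.2 G).derivativeFun := by
    intro p; rw [Dx, PowerSeries.coeff_mk]
  have rhs2 : ∀ p : ℕ × ℕ, PowerSeries.coeff (R := V) p.1 G * PowerSeries.coeff (R := V) p.2 (Dx F)
      = PowerSeries.coeff (R := V) p.1 G * (PowerSeries.coeff (R := V) p.2 F).derivativeFun := by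
    intro p; rw [Dx, PowerSeries.coeff_mk]
  simp only [rhs1, rhs2]
  have swap : ∑ p ∈ Finset.HasAntidiagonal.antidiagonal j,
      PowerSeries.coeff (R := V) p.1 G * (PowerSeries.coeff (R := V) p.2 F).derivativeFun
      = ∑ p ∈ Finset.HasAntidiagonal.antidiagonal j,
      PowerSeries.coeff (R := V) p.2 G * (PowerSeries.coeff (R := V) p.1 F).derivativeFun := by
    exact Finset.Nat.sum_antidiagonal_swap (f := fun p => PowerSeries.coeff (R := V) p.2 G * (PowerSeries.coeff (R := V) p.1 F).derivativeFun)
  rw [swap, ← Finset.sum_add_distrib]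
  apply Finset.sum_congr rfl
  intro p _
  rw [PowerSeries.derivativeFun_mul]
  rw [smul_eq_mul, smul_eq_mul]

lemma fs_add_e0 (a j : ℕ) : fs a j + Finsupp.single 0 1 = fs (a+1) j := by
  ext i; fin_cases i <;> simp [fs, Finsupp.single_apply]

lemma fs_add_e1 (a j : ℕ) : fs a j + Finsupp.single 1 1 = fs a (j+1) := by
  ext i; fin_cases i <;> simp [fs, Finsupp.single_apply]

lemma Phi_pd0 (f : PS) : Phi (pd 0 f) = Dx (Phi f) := by
  apply c2_ext
  intro a j
  rw [c2_Phi]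
  have h1 : MvPowerSeries.coeff (fs a j) (pd 0 f)
      = ((a : ℂ) + 1) * MvPowerSeries.coeff (fs (a+1) j) f := by
    show pd 0 f (fs a j) = _
    rw [pd]
    rw [fs_apply0, fs_add_e0]
  rw [h1]
  rw [c2, Dx, PowerSeries.coeff_mk, show ∀ (g : V) (n : ℕ), PowerSeries.coeff n g.derivativeFun = PowerSeries.coeff (n+1) g * (n+1) from fun g n => PowerSeries.coeff_derivative g n]
  rw [show Phi = (Phi : PS ≃+* T) from rfl]
  have h2 : PowerSeries.coeff (R := ℂ) (a+1) (PowerSeries.coeff (R := V) j (Phi f))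
      = MvPowerSeries.coeff (fs (a+1) j) f := c2_Phi f (a+1) j
  rw [h2]
  push_cast
  ring

lemma Phi_pd1 (f : PS) : Phi (pd 1 f) = PowerSeries.derivativeFun (Phi f) := by
  apply c2_ext
  intro a j
  rw [c2_Phi]
  have h1 : MvPowerSeries.coeff (fs a j) (pd 1 f)
      = ((j : ℂ) + 1) * MvPowerSeries.coeff (fs a (j+1)) f := by
    show pd 1 f (fs a j) = _
    rw [pd]
    rw [fs_apply1, fs_add_e1]
  rw [h1]
  rw [c2, show ∀ (g : T) (n : ℕ), PowerSeries.coeff n g.derivativeFun = PowerSeries.coeff (n+1) g * (n+1) from fun g n => PowerSeries.coeff_derivative g n]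
  rw [show ((j:V)+1) = (((j+1 : ℕ)) : V) by push_cast; ring]
  rw [show (((j+1:ℕ)) : V) = PowerSeries.C (R := ℂ) (((j+1:ℕ)) : ℂ) from (map_natCast (PowerSeries.C (R := ℂ)) (j+1)).symm]
  rw [PowerSeries.coeff_mul_C]
  have h2 : PowerSeries.coeff (R := ℂ) a (PowerSeries.coeff (R := V) (j+1) (Phi f))
      = MvPowerSeries.coeff (fs a (j+1)) f := c2_Phi f a (j+1)
  rw [h2]
  push_cast
  ring

lemma pd_mul0 (f g : PS) : pd 0 (f * g) = pd 0 f * g + f * pd 0 g := by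
  apply Phi.injective
  rw [Phi_pd0, map_add, map_mul, map_mul, map_mul, Phi_pd0, Phi_pd0, Dx_mul]
  ring

lemma pd_mul1 (f g : PS) : pd 1 (f * g) = pd 1 f * g + f * pd 1 g := by
  apply Phi.injective
  rw [Phi_pd1, map_add, map_mul, map_mul, map_mul, Phi_pd1, Phi_pd1,
    PowerSeries.derivativeFun_mul, smul_eq_mul, smul_eq_mul]
  ring

lemma pd_mul (i : Fin 2) (f g : PS) : pd i (f * g) = pd i f * g + f * pd i g := by
  fin_cases i
  · exact pd_mul0 f g
  · exact pd_mul1 f g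

/-! ### Order argument -/

lemma pd_not_dvd (q : PS) (hq0 : q ≠ 0) (hqu : ¬ IsUnit q) : ∃ i : Fin 2, ¬ q ∣ pd i q := by
  classical
  have hex : ∃ n, ∃ m : Fin 2 →₀ ℕ, m 0 + m 1 = n ∧ MvPowerSeries.coeff m q ≠ 0 := by
    by_contra hc
    push_neg at hc
    apply hq0
    apply MvPowerSeries.ext; intro m
    rw [map_zero]
    exact hc (m 0 + m 1) m rfl
  set d := Nat.find hex with hd
  obtain ⟨m, hmsum, hmne⟩ := Nat.find_spec hex
  have hmin : ∀ m' : Fin 2 →₀ ℕ, m' 0 + m' 1 < d → MvPowerSeries.coeff m' q = 0 := by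
    intro m' hm'
    by_contra hne'
    exact Nat.find_min hex hm' ⟨m', rfl, hne'⟩
  have hd1 : 1 ≤ d := by
    by_contra hc
    push_neg at hc
    have hd0 : d = 0 := by omega
    have hm0 : m = 0 := by
      rw [eq_fs m, show m 0 = 0 by omega, show m 1 = 0 by omega]
      ext i; fin_cases i <;> simp [fs]
    apply hqu
    rw [hm0] at hmne
    have hcc : MvPowerSeries.constantCoeff (σ := Fin 2) (R := ℂ) q = ↑(Units.mk0 _ hmne) := by
      rw [← MvPowerSeries.coeff_zero_eq_constantCoeff_apply]
      rfl
    exact IsUnit.of_mul_eq_one _ (MvPowerSeries.mul_invOfUnit q _ hcc)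
  have key : ∀ i : Fin 2, 1 ≤ m i → ¬ q ∣ pd i q := by
    rintro i hmi ⟨s, hs⟩
    set m' : Fin 2 →₀ ℕ := m - Finsupp.single i 1 with hm'def
    have hadd : m' + Finsupp.single i 1 = m := by
      ext x
      rw [Finsupp.add_apply, hm'def, Finsupp.tsub_apply]
      by_cases hx : x = i
      · subst hx
        simp only [Finsupp.single_eq_same]
        omega
      · rw [Finsupp.single_apply, if_neg (by exact fun h => hx h.symm)]
        omega
    have hm'i : (m' i : ℕ) + 1 = m i := by
      rw [hm'def, Finsupp.tsub_apply, Finsupp.single_eq_same]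
      omega
    have hm'sum : m' 0 + m' 1 + 1 = d := by
      have h0 := congrArg (fun g : Fin 2 →₀ ℕ => g 0) hadd
      have h1 := congrArg (fun g : Fin 2 →₀ ℕ => g 1) hadd
      simp only [Finsupp.add_apply] at h0 h1
      have : (Finsupp.single i 1) 0 + (Finsupp.single i 1) 1 = 1 := by
        fin_cases i <;> simp [Finsupp.single_apply]
      omega
    have hco : MvPowerSeries.coeff m' (pd i q) = ((m i : ℂ)) * MvPowerSeries.coeff m q := by
      show pd i q m' = _
      rw [pd, hadd, ← hm'i]
      push_cast
      ring
    have hzero : MvPowerSeries.coeff m' (q * s) = 0 := by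
      rw [MvPowerSeries.coeff_mul]
      apply Finset.sum_eq_zero
      intro z hz
      rw [Finset.HasAntidiagonal.mem_antidiagonal] at hz
      have hz0 := congrArg (fun g : Fin 2 →₀ ℕ => g 0) hz
      have hz1 := congrArg (fun g : Fin 2 →₀ ℕ => g 1) hz
      simp only [Finsupp.add_apply] at hz0 hz1
      rw [hmin z.1 (by omega), zero_mul]
    rw [hs, hzero] at hco
    have : MvPowerSeries.coeff m q ≠ 0 := hmne
    have hmi' : (m i : ℂ) ≠ 0 := Nat.cast_ne_zero.mpr (by omega)
    exact this (by
      have := hco.symm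
      rcases mul_eq_zero.mp this with h | h
      · exact absurd h hmi'
      · exact h)
  by_cases h0 : 1 ≤ m 0
  · exact ⟨0, key 0 h0⟩
  · refine ⟨1, key 1 ?_⟩
    omega

lemma prime_factor_pd (f q : PS) (hf : Squarefree f) (hq : Prime q) (hqf : q ∣ f) :
    ¬ q ∣ pd 0 f ∨ ¬ q ∣ pd 1 f := by
  obtain ⟨e, he⟩ := hqf
  have hqe : ¬ q ∣ e := by
    intro hd
    obtain ⟨w, hw⟩ := hd
    apply hq.not_unit
    apply hf q
    refine ⟨w, ?_⟩
    rw [he, hw]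
    ring
  by_contra hc
  push_neg at hc
  obtain ⟨h0, h1⟩ := hc
  have key : ∀ i : Fin 2, q ∣ pd i f → q ∣ pd i q := by
    intro i hi
    rw [he, pd_mul] at hi
    have h2 : q ∣ pd i q * e := by
      have h3 := dvd_sub hi (dvd_mul_right q (pd i e))
      rwa [add_sub_cancel_right] at h3
    rcases hq.2.2 _ _ h2 with h | h
    · exact h
    · exact absurd h hqe
  obtain ⟨i, hni⟩ := pd_not_dvd q hq.ne_zero hq.not_unit
  fin_cases i
  · exact hni (key 0 h0)
  · exact hni (key 1 h1)

lemma isUnit_C_PS (c : ℂ) (hc : c ≠ 0) : IsUnit (MvPowerSeries.C (σ := Fin 2) (R := ℂ) c) := by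
  have h : MvPowerSeries.constantCoeff (σ := Fin 2) (R := ℂ) (MvPowerSeries.C (σ := Fin 2) (R := ℂ) c)
      = ↑(Units.mk0 c hc) := by simp
  exact IsUnit.of_mul_eq_one _ (MvPowerSeries.mul_invOfUnit _ _ h)

lemma exists_good_c (f : PS) (hf : Squarefree f) (hf0 : f ≠ 0) :
    ∃ c : ℂ, IsRelPrime (pd 0 f + MvPowerSeries.C (σ := Fin 2) (R := ℂ) c * pd 1 f) f := by
  classical
  obtain ⟨u, l, hu, hl, heq⟩ := exists_prime_factors_R f hf0
  set bad : Set ℂ :=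
    {c | ∃ q : PS, Prime q ∧ q ∣ f ∧ q ∣ (pd 0 f + MvPowerSeries.C (σ := Fin 2) (R := ℂ) c * pd 1 f)} with hbad
  have hlf : l.prod ∣ f := ⟨u, by rw [heq]; ring⟩
  have hsub : bad ⊆ ⋃ q ∈ l.toFinset,
      {c | q ∣ (pd 0 f + MvPowerSeries.C (σ := Fin 2) (R := ℂ) c * pd 1 f)} := by
    rintro c ⟨q', hq', hq'f, hq'g⟩
    have hq'l : q' ∣ l.prod := by
      obtain ⟨uu, huu⟩ := hu
      have hlp : l.prod = ↑uu⁻¹ * f := by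
        rw [heq, ← huu, ← mul_assoc, Units.inv_mul, one_mul]
      rw [hlp]
      exact Dvd.dvd.mul_left hq'f _
    obtain ⟨q, hqmem, hq'q⟩ := hq'.exists_mem_multiset_dvd hq'l
    have hqprime : Prime q := hl q hqmem
    obtain ⟨t, ht⟩ := hq'q
    have htu : IsUnit t := by
      rcases hqprime.irreducible.isUnit_or_isUnit ht with h | h
      · exact absurd h hq'.not_unit
      · exact h
    obtain ⟨tu, htu'⟩ := htu
    have hqq' : q ∣ q' := ⟨↑tu⁻¹, by rw [ht, ← htu', mul_assoc, Units.mul_inv, mul_one]⟩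
    exact Set.mem_biUnion (Multiset.mem_toFinset.mpr hqmem) (hqq'.trans hq'g)
  have hfin : bad.Finite := by
    apply Set.Finite.subset _ hsub
    apply Set.Finite.biUnion (l.toFinset.finite_toSet)
    intro q hq
    apply Set.Subsingleton.finite
    intro c1 hc1 c2 hc2
    by_contra hne
    have hqmem := Multiset.mem_toFinset.mp hq
    have hqprime := hl q hqmem
    have hqf : q ∣ f := (Multiset.dvd_prod hqmem).trans hlf
    have hc1' : q ∣ (pd 0 f + MvPowerSeries.C (σ := Fin 2) (R := ℂ) c1 * pd 1 f) := hc1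
    have hc2' : q ∣ (pd 0 f + MvPowerSeries.C (σ := Fin 2) (R := ℂ) c2 * pd 1 f) := hc2
    have hd : q ∣ (MvPowerSeries.C (σ := Fin 2) (R := ℂ) (c1 - c2)) * pd 1 f := by
      have hsubd := dvd_sub hc1' hc2'
      have : (pd 0 f + MvPowerSeries.C (σ := Fin 2) (R := ℂ) c1 * pd 1 f)
          - (pd 0 f + MvPowerSeries.C (σ := Fin 2) (R := ℂ) c2 * pd 1 f)
          = (MvPowerSeries.C (σ := Fin 2) (R := ℂ) (c1 - c2)) * pd 1 f := by
        rw [map_sub]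
        ring
      rwa [this] at hsubd
    obtain ⟨cu, hcu⟩ := isUnit_C_PS (c1 - c2) (sub_ne_zero.mpr hne)
    rw [← hcu] at hd
    have hq1 : q ∣ pd 1 f := (Units.dvd_mul_left).mp hd
    have hq0 : q ∣ pd 0 f := by
      have h3 := dvd_sub hc1' (Dvd.dvd.mul_left hq1 (MvPowerSeries.C (σ := Fin 2) (R := ℂ) c1))
      rwa [add_sub_cancel_right] at h3
    rcases prime_factor_pd f q hf hqprime hqf with h | h
    · exact h hq0
    · exact h hq1
  obtain ⟨c, hc⟩ := (Set.Finite.infinite_compl hfin).nonempty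
  refine ⟨c, ?_⟩
  intro d hdg hdf
  by_contra hdu
  have hd0 : d ≠ 0 := by
    rintro rfl
    rw [zero_dvd_iff] at hdf
    exact hf0 hdf
  obtain ⟨u', l', hu', hl', heq'⟩ := exists_prime_factors_R d hd0
  have hl'ne : l' ≠ 0 := by
    rintro rfl
    rw [Multiset.prod_zero, mul_one] at heq'
    exact hdu (heq' ▸ hu')
  obtain ⟨q, hqmem⟩ := Multiset.exists_mem_of_ne_zero hl'ne
  have hqd : q ∣ d := (Multiset.dvd_prod hqmem).trans ⟨u', by rw [heq']; ring⟩
  exact hc ⟨q, hl' q hqmem, hqd.trans hdf, hqd.trans hdg⟩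

lemma isPrimal_of_ne_zero (z : PS) (hz : z ≠ 0) : IsPrimal z := by
  obtain ⟨u, l, hu, hl, heq⟩ := exists_prime_factors_R z hz
  rw [heq]
  refine IsPrimal.mul ?_ ?_
  · exact hu.isPrimal
  · exact (Submonoid.isPrimal PS).multiset_prod_mem l (fun q hq => (hl q hq).isPrimal)

end SaitoAux


theorem saito_membership_criterion (f : PS) (hf : Squarefree f) (ω : PS × PS) :
    (∃ g : PS, IsRelPrime g f ∧ g • ω ∈ FSet f) ↔
      ∃ h : PS, wedge ω (dd f) = h * f := by
  constructor
  · rintro ⟨g, hrel, p, η, hgω⟩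
    have h1 : g * ω.1 = p * pd 0 f + f * η.1 := by
      have := congrArg Prod.fst hgω
      simpa [dd, Prod.smul_fst, Prod.fst_add, smul_eq_mul] using this
    have h2 : g * ω.2 = p * pd 1 f + f * η.2 := by
      have := congrArg Prod.snd hgω
      simpa [dd, Prod.smul_snd, Prod.snd_add, smul_eq_mul] using this
    have hdvd : f ∣ g * wedge ω (dd f) := by
      refine ⟨wedge η (dd f), ?_⟩
      show g * (ω.1 * (dd f).2 - ω.2 * (dd f).1) = f * (η.1 * (dd f).2 - η.2 * (dd f).1)
      have hdd1 : (dd f).1 = pd 0 f := rfl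
      have hdd2 : (dd f).2 = pd 1 f := rfl
      rw [hdd1, hdd2]
      linear_combination (pd 1 f) * h1 - (pd 0 f) * h2
    have hfprimal : IsPrimal f := SaitoAux.isPrimal_of_ne_zero f (by
      rintro rfl
      exact not_squarefree_zero hf)
    obtain ⟨h, hh⟩ := hrel.symm.dvd_of_dvd_mul_left_of_isPrimal hdvd hfprimal
    exact ⟨h, by rw [hh]; ring⟩
  · rintro ⟨h, hW⟩
    by_cases hu : IsUnit f
    · obtain ⟨uf, huf⟩ := hu
      refine ⟨1, isRelPrime_one_left, 0, (↑uf⁻¹ : PS) • ω, ?_⟩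
      rw [one_smul, zero_smul, zero_add, smul_smul, ← huf, Units.mul_inv, one_smul]
    · have hf0 : f ≠ 0 := by
        rintro rfl
        exact not_squarefree_zero hf
      obtain ⟨c, hc⟩ := SaitoAux.exists_good_c f hf hf0
      have hW' : ω.1 * pd 1 f - ω.2 * pd 0 f = h * f := hW
      refine ⟨pd 0 f + MvPowerSeries.C (σ := Fin 2) (R := ℂ) c * pd 1 f, hc,
        ω.1 + MvPowerSeries.C (σ := Fin 2) (R := ℂ) c * ω.2, (MvPowerSeries.C (σ := Fin 2) (R := ℂ) c * h, -h), ?_⟩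
      have e1 : (pd 0 f + MvPowerSeries.C (σ := Fin 2) (R := ℂ) c * pd 1 f) * ω.1
          = (ω.1 + MvPowerSeries.C (σ := Fin 2) (R := ℂ) c * ω.2) * pd 0 f
            + f * (MvPowerSeries.C (σ := Fin 2) (R := ℂ) c * h) := by
        linear_combination (MvPowerSeries.C (σ := Fin 2) (R := ℂ) c) * hW'
      have e2 : (pd 0 f + MvPowerSeries.C (σ := Fin 2) (R := ℂ) c * pd 1 f) * ω.2
          = (ω.1 + MvPowerSeries.C (σ := Fin 2) (R := ℂ) c * ω.2) * pd 1 f + f * (-h) := by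
        linear_combination -hW'
      have : (pd 0 f + MvPowerSeries.C (σ := Fin 2) (R := ℂ) c * pd 1 f) • ω
          = ((ω.1 + MvPowerSeries.C (σ := Fin 2) (R := ℂ) c * ω.2) • dd f
            + f • ((MvPowerSeries.C (σ := Fin 2) (R := ℂ) c * h, -h) : PS × PS)) := by
        apply Prod.ext
        · simpa [dd, Prod.smul_fst, Prod.fst_add, smul_eq_mul] using e1
        · simpa [dd, Prod.smul_snd, Prod.snd_add, smul_eq_mul] using e2
      exact this
end
end

section
/- Let f ∈ ℂ{x,y} be reduced with gcd(f_x, f_y) = 1. The map φ sending h ∈ (J(f) : f) to the class of A dx + B dy in S(f)/F(f), where h·f = A f_y − B f_x, is a well-defined surjective ℂ-linear map with kernel J(f). Consequently (J(f):f)/J(f) and S(f)/F(f) are isomorphic as ℂ-vector spaces. -/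
set_option maxHeartbeats 1000000
set_option synthInstance.maxHeartbeats 1000000

open MvPowerSeries

noncomputable section

/-- `S(f)` as a `ℂ{x,y}`-submodule of `Ω¹`. -/
noncomputable def SaitoMod (f : PS) : Submodule PS (PS × PS) where
  carrier := SaitoSet f
  zero_mem' := ⟨0, by simp [wedge]⟩
  add_mem' := by
    rintro a b ⟨h₁, e₁⟩ ⟨h₂, e₂⟩
    refine ⟨h₁ + h₂, ?_⟩
    simp only [wedge, Prod.fst_add, Prod.snd_add] at *
    ring_nf
    linear_combination e₁ + e₂
  smul_mem' := by
    rintro c a ⟨h, e⟩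
    refine ⟨c * h, ?_⟩
    simp only [wedge, Prod.smul_fst, Prod.smul_snd, smul_eq_mul] at *
    linear_combination c * e

/-- `F(f)` as a `ℂ{x,y}`-submodule of `Ω¹`. -/
noncomputable def FMod (f : PS) : Submodule PS (PS × PS) where
  carrier := FSet f
  zero_mem' := ⟨0, 0, by simp⟩
  add_mem' := by
    rintro a b ⟨p₁, η₁, rfl⟩ ⟨p₂, η₂, rfl⟩
    exact ⟨p₁ + p₂, η₁ + η₂, by rw [add_smul, smul_add]; abel⟩
  smul_mem' := by
    rintro c a ⟨p, η, rfl⟩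
    exact ⟨c * p, c • η, by rw [smul_add, mul_smul, smul_comm c f η]⟩

abbrev AA := PowerSeries ℂ
abbrev BB := PowerSeries AA

namespace Bridge

def fs (m n : ℕ) : Fin 2 →₀ ℕ := Finsupp.single 0 m + Finsupp.single 1 n

@[simp] lemma fs_apply_zero (m n : ℕ) : fs m n 0 = m := by simp [fs]
@[simp] lemma fs_apply_one (m n : ℕ) : fs m n 1 = n := by simp [fs]

lemma fs_eq (s : Fin 2 →₀ ℕ) : fs (s 0) (s 1) = s := by
  ext i
  fin_cases i <;> simp

lemma fs_add (m n m' n' : ℕ) : fs (m + m') (n + n') = fs m n + fs m' n' := by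
  ext i; fin_cases i <;> simp

lemma fs_eq_zero_iff (m n : ℕ) : fs m n = 0 ↔ m = 0 ∧ n = 0 := by
  constructor
  · intro h
    constructor
    · have := congrArg (fun s => (s : Fin 2 →₀ ℕ) 0) h; simpa using this
    · have := congrArg (fun s => (s : Fin 2 →₀ ℕ) 1) h; simpa using this
  · rintro ⟨rfl, rfl⟩; ext i; fin_cases i <;> simp

def toB : PS → BB := fun f =>
  PowerSeries.mk fun n => PowerSeries.mk fun m => MvPowerSeries.coeff (fs m n) f

def ofB : BB → PS := fun g s =>
  PowerSeries.coeff (R := ℂ) (s 0) (PowerSeries.coeff (R := AA) (s 1) g)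

@[simp] lemma coeff_toB (f : PS) (n m : ℕ) :
    PowerSeries.coeff (R := ℂ) m (PowerSeries.coeff (R := AA) n (toB f)) = MvPowerSeries.coeff (fs m n) f := by
  simp [toB]

lemma coeff_ofB (g : BB) (s : Fin 2 →₀ ℕ) :
    MvPowerSeries.coeff s (ofB g) = PowerSeries.coeff (R := ℂ) (s 0) (PowerSeries.coeff (R := AA) (s 1) g) := rfl

def theIso : PS ≃+* BB where
  toFun := toB
  invFun := ofB
  left_inv := by
    intro f
    ext s
    rw [coeff_ofB, ← fs_eq s, coeff_toB]
    simp [fs_eq]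
  right_inv := by
    intro g
    apply PowerSeries.ext; intro n
    apply PowerSeries.ext; intro m
    rw [coeff_toB, coeff_ofB]
    simp
  map_add' := by
    intro f g
    apply PowerSeries.ext; intro n
    apply PowerSeries.ext; intro m
    simp [toB]
  map_mul' := by
    intro f g
    apply PowerSeries.ext; intro n
    apply PowerSeries.ext; intro m
    rw [coeff_toB, MvPowerSeries.coeff_mul, PowerSeries.coeff_mul, map_sum]
    simp only [PowerSeries.coeff_mul, coeff_toB]
    rw [← Finset.sum_product']
    refine Finset.sum_nbij' (i := fun p => ((p.1 1, p.2 1), (p.1 0, p.2 0)))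
      (j := fun x => (fs x.2.1 x.1.1, fs x.2.2 x.1.2)) ?_ ?_ ?_ ?_ ?_
    · intro p hp
      rw [Finset.HasAntidiagonal.mem_antidiagonal] at hp
      simp only [Finset.mem_product, Finset.HasAntidiagonal.mem_antidiagonal]
      constructor
      · have := congrArg (fun s => (s : Fin 2 →₀ ℕ) 1) hp; simpa using this
      · have := congrArg (fun s => (s : Fin 2 →₀ ℕ) 0) hp; simpa using this
    · intro x hx
      simp only [Finset.mem_product, Finset.HasAntidiagonal.mem_antidiagonal] at hx
      rw [Finset.HasAntidiagonal.mem_antidiagonal, ← fs_add, hx.1, hx.2]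
    · intro p hp
      exact Prod.ext (fs_eq p.1) (fs_eq p.2)
    · intro x hx
      simp
    · intro p hp
      rw [fs_eq, fs_eq]

end Bridge

namespace W

open PowerSeries

def sh (d : ℕ) (w : BB) : BB := PowerSeries.mk fun n => PowerSeries.coeff (R := AA) (n + d) w
def tr (d : ℕ) (w : BB) : BB := PowerSeries.mk fun n => if n < d then PowerSeries.coeff (R := AA) n w else 0

@[simp] lemma coeff_sh (d n : ℕ) (w : BB) :
    PowerSeries.coeff (R := AA) n (sh d w) = PowerSeries.coeff (R := AA) (n + d) w := by simp [sh]
lemma coeff_tr (d n : ℕ) (w : BB) :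
    PowerSeries.coeff (R := AA) n (tr d w) = if n < d then PowerSeries.coeff (R := AA) n w else 0 := by simp [tr]

def shL (d : ℕ) : BB →ₗ[AA] BB where
  toFun := sh d
  map_add' := by intro a b; apply PowerSeries.ext; intro n; simp
  map_smul' := by intro c a; apply PowerSeries.ext; intro n; simp

lemma decomp (d : ℕ) (w : BB) : w = tr d w + PowerSeries.X ^ d * sh d w := by
  apply PowerSeries.ext; intro n
  rcases lt_or_ge n d with h | h
  · have h0 : PowerSeries.coeff (R := AA) n (PowerSeries.X ^ d * sh d w) = 0 := by
      have : (PowerSeries.X : BB) ^ d ∣ PowerSeries.X ^ d * sh d w := dvd_mul_right _ _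
      exact (PowerSeries.X_pow_dvd_iff.mp this) n h
    simp [coeff_tr, h, h0]
  · obtain ⟨k, rfl⟩ := Nat.exists_eq_add_of_le h
    have hx : PowerSeries.coeff (R := AA) (d + k) (PowerSeries.X ^ d * sh d w) = PowerSeries.coeff (R := AA) k (sh d w) := by
      rw [Nat.add_comm d k]
      exact PowerSeries.coeff_X_pow_mul _ _ _
    rw [map_add, coeff_tr, hx]
    simp [Nat.not_lt.2 h, Nat.add_comm d k]

lemma sh_Xpow_mul (d : ℕ) (w : BB) : sh d (PowerSeries.X ^ d * w) = w := by
  apply PowerSeries.ext; intro n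
  rw [coeff_sh]
  exact PowerSeries.coeff_X_pow_mul _ _ _

def Ek (k : ℕ) (w : BB) : Prop := ∀ n, (PowerSeries.X : AA) ^ k ∣ PowerSeries.coeff (R := AA) n w

lemma Ek_zero (w : BB) : Ek 0 w := by intro n; simp
lemma Ek_mono {j k : ℕ} (h : j ≤ k) {w : BB} (hw : Ek k w) : Ek j w :=
  fun n => (pow_dvd_pow _ h).trans (hw n)
lemma Ek_add {k : ℕ} {a b : BB} (ha : Ek k a) (hb : Ek k b) : Ek k (a + b) := by
  intro n; rw [map_add]; exact dvd_add (ha n) (hb n)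
lemma Ek_neg {k : ℕ} {a : BB} (ha : Ek k a) : Ek k (-a) := by
  intro n; rw [map_neg]; exact (ha n).neg_right
lemma Ek_sub {k : ℕ} {a b : BB} (ha : Ek k a) (hb : Ek k b) : Ek k (a - b) := by
  rw [sub_eq_add_neg]; exact Ek_add ha (Ek_neg hb)
lemma Ek_mul {j k : ℕ} {a b : BB} (ha : Ek j a) (hb : Ek k b) : Ek (j + k) (a * b) := by
  intro n
  rw [PowerSeries.coeff_mul]
  refine Finset.dvd_sum ?_
  intro p _
  rw [pow_add]
  exact mul_dvd_mul (ha p.1) (hb p.2)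
lemma Ek_mul_right {k : ℕ} (a : BB) {b : BB} (hb : Ek k b) : Ek k (a * b) := by
  have := Ek_mul (Ek_zero a) hb
  rwa [Nat.zero_add] at this
lemma Ek_mul_left {k : ℕ} {a : BB} (b : BB) (ha : Ek k a) : Ek k (a * b) := by
  rw [mul_comm]; exact Ek_mul_right b ha
lemma Ek_sh {k d : ℕ} {w : BB} (hw : Ek k w) : Ek k (sh d w) := by
  intro n; rw [coeff_sh]; exact hw _
lemma Ek_iff {k : ℕ} {w : BB} :
    Ek k w ↔ ∀ n m, m < k → PowerSeries.coeff (R := ℂ) m (PowerSeries.coeff (R := AA) n w) = 0 := by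
  constructor
  · intro h n m hm; exact PowerSeries.X_pow_dvd_iff.mp (h n) m hm
  · intro h n; exact PowerSeries.X_pow_dvd_iff.mpr (fun m hm => h n m hm)
lemma eq_zero_of_forall_Ek {w : BB} (h : ∀ k, Ek k w) : w = 0 := by
  apply PowerSeries.ext; intro n
  apply PowerSeries.ext; intro m
  simpa using Ek_iff.mp (h (m + 1)) n m (Nat.lt_succ_self m)

theorem wdiv (p : BB) (d : ℕ) (h1 : ∀ j, j < d → (PowerSeries.X : AA) ∣ PowerSeries.coeff (R := AA) j p)
    (h2 : IsUnit (PowerSeries.coeff (R := AA) d p)) (g : BB) :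
    ∃ u r : BB, g = u * p + r ∧ sh d r = 0 := by
  set s := sh d p with hs
  have hsu : IsUnit s := by
    rw [PowerSeries.isUnit_iff_constantCoeff, ← PowerSeries.coeff_zero_eq_constantCoeff_apply,
      coeff_sh, Nat.zero_add]
    exact h2
  obtain ⟨ι, hι⟩ := hsu.exists_right_inv
  set c := ι * tr d p with hc
  have hEc : Ek 1 c := by
    have htr : Ek 1 (tr d p) := by
      intro n
      rw [coeff_tr, pow_one]
      split
      · exact h1 n ‹_›
      · exact dvd_zero _
    exact Ek_mul_right ι htr
  set N : BB →+ BB :=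
    { toFun := fun w => sh d (c * w)
      map_zero' := by
        show sh d (c * 0) = 0
        rw [mul_zero]
        exact map_zero (shL d)
      map_add' := by
        intro a b
        show sh d (c * (a + b)) = sh d (c * a) + sh d (c * b)
        rw [mul_add]
        exact map_add (shL d) _ _ } with hNdef
  have Napp : ∀ w, N w = sh d (c * w) := fun w => rfl
  have hN : ∀ k w, Ek k w → Ek (k + 1) (N w) := by
    intro k w hw
    rw [Napp]
    refine Ek_sh ?_
    have := Ek_mul hEc hw
    rwa [Nat.add_comm] at this
  set F : ℕ → BB := fun i => (fun w => -(N w))^[i] (sh d g) with hF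
  have hFsucc : ∀ i, F (i + 1) = -(N (F i)) := fun i => Function.iterate_succ_apply' _ _ _
  have hFE : ∀ i, Ek i (F i) := by
    intro i
    induction i with
    | zero => exact Ek_zero _
    | succ i ih =>
      rw [hFsucc]
      exact Ek_neg (hN i _ ih)
  set v : BB := PowerSeries.mk fun n => PowerSeries.mk fun m =>
    ∑ i ∈ Finset.range (m + 1), PowerSeries.coeff (R := ℂ) m (PowerSeries.coeff (R := AA) n (F i)) with hv
  have coeff_v : ∀ n m, PowerSeries.coeff (R := ℂ) m (PowerSeries.coeff (R := AA) n v)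
      = ∑ i ∈ Finset.range (m + 1), PowerSeries.coeff (R := ℂ) m (PowerSeries.coeff (R := AA) n (F i)) := by
    intro n m; rw [hv]; simp
  have hpart : ∀ K, Ek K (v - ∑ i ∈ Finset.range K, F i) := by
    intro K
    rw [Ek_iff]
    intro n m hm
    rw [map_sub, map_sub, coeff_v, map_sum, map_sum]
    rw [sub_eq_zero]
    refine Finset.sum_subset ?_ ?_
    · intro i hi
      rw [Finset.mem_range] at hi ⊢
      omega
    · intro i _ hi
      rw [Finset.mem_range] at hi
      exact Ek_iff.mp (hFE i) n m (by omega)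
  have hshift : ∀ K, ∑ i ∈ Finset.range K, F (i + 1)
      = (∑ i ∈ Finset.range K, F i) + F K - F 0 := by
    intro K
    induction K with
    | zero => simp
    | succ K ih =>
      rw [Finset.sum_range_succ, ih, Finset.sum_range_succ]
      ring
  have hfix : v = sh d g - N v := by
    rw [← sub_eq_zero]
    apply eq_zero_of_forall_Ek
    intro K
    set SK := ∑ i ∈ Finset.range K, F i with hSK
    have he : Ek K (v - SK) := hpart K
    have hNSK : N SK = F 0 - SK - F K := by
      rw [hSK, map_sum]
      have : ∀ i ∈ Finset.range K, N (F i) = -(F (i+1)) := by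
        intro i _; rw [hFsucc]; ring
      rw [Finset.sum_congr rfl this, Finset.sum_neg_distrib, hshift K]
      ring
    have hexpr : v - (sh d g - N v) = (v - SK) + N (v - SK) - F K := by
      rw [map_sub, hNSK]
      have hF0 : F 0 = sh d g := rfl
      rw [← hF0]
      ring
    rw [hexpr]
    refine Ek_sub (Ek_add he ?_) (hFE K)
    exact Ek_mono (Nat.le_succ K) (hN K _ he)
  refine ⟨ι * v, g - (ι * v) * p, by ring, ?_⟩
  have h1' : (ι * v) * p = c * v + PowerSeries.X ^ d * (v * (s * ι)) := by
    nth_rewrite 1 [decomp d p]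
    rw [hc, hs]
    ring
  have : sh d ((ι * v) * p) = sh d g := by
    rw [h1', hι, mul_one]
    have : sh d (c * v + PowerSeries.X ^ d * v) = sh d (c * v) + sh d (PowerSeries.X ^ d * v) :=
      map_add (shL d) _ _
    rw [this, sh_Xpow_mul, ← Napp]
    linear_combination hfix
  have hsub : sh d (g - (ι * v) * p) = sh d g - sh d ((ι * v) * p) := map_sub (shL d) _ _
  rw [hsub, this, sub_self]

theorem wuniq (p : BB) (d : ℕ) (h1 : ∀ j, j < d → (PowerSeries.X : AA) ∣ PowerSeries.coeff (R := AA) j p)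
    (h2 : IsUnit (PowerSeries.coeff (R := AA) d p)) {u r u' r' : BB}
    (h : u * p + r = u' * p + r') (hr : sh d r = 0) (hr' : sh d r' = 0) :
    u = u' ∧ r = r' := by
  set s := sh d p with hs
  have hsu : IsUnit s := by
    rw [PowerSeries.isUnit_iff_constantCoeff, ← PowerSeries.coeff_zero_eq_constantCoeff_apply,
      coeff_sh, Nat.zero_add]
    exact h2
  obtain ⟨ι, hι⟩ := hsu.exists_right_inv
  have htr : Ek 1 (tr d p) := by
    intro n
    rw [coeff_tr, pow_one]
    split
    · exact h1 n ‹_›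
    · exact dvd_zero _
  set w := u - u' with hw
  have hwp : sh d (w * p) = 0 := by
    have hwp' : w * p = r' - r := by rw [hw]; linear_combination h
    rw [hwp']
    have : sh d (r' - r) = sh d r' - sh d r := map_sub (shL d) _ _
    rw [this, hr, hr', sub_self]
  have hkey : ∀ k, Ek k w := by
    intro k
    induction k with
    | zero => exact Ek_zero _
    | succ k ih =>
      have hsplit : w * p = w * tr d p + PowerSeries.X ^ d * (w * s) := by
        nth_rewrite 1 [decomp d p]; ring
      have e0 : sh d (w * tr d p) + w * s = 0 := by
        have e1 : sh d (w * p) = sh d (w * tr d p) + sh d (PowerSeries.X ^ d * (w * s)) := by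
          rw [hsplit]; exact map_add (shL d) _ _
        rw [hwp, sh_Xpow_mul] at e1
        linear_combination -e1
      have hwe : w = -(sh d (w * tr d p)) * ι := by
        have e2 : w * s = -(sh d (w * tr d p)) := by linear_combination e0
        rw [← e2, mul_assoc, hι, mul_one]
      rw [hwe]
      refine Ek_mul_left ι ?_
      refine Ek_neg (Ek_sh ?_)
      exact Ek_mul ih htr
  have hw0 : w = 0 := eq_zero_of_forall_Ek hkey
  have hu : u = u' := by rw [hw] at hw0; linear_combination hw0
  refine ⟨hu, by rw [hu] at h; linear_combination h⟩

-- ### x-adic facts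

def xx : BB := PowerSeries.C (R := AA) (PowerSeries.X : AA)

lemma xx_dvd_iff (b : BB) :
    xx ∣ b ↔ ∀ n, PowerSeries.constantCoeff (R := ℂ) (PowerSeries.coeff (R := AA) n b) = 0 := by
  constructor
  · rintro ⟨c, rfl⟩ n
    rw [xx, PowerSeries.coeff_C_mul, map_mul, PowerSeries.constantCoeff_X, zero_mul]
  · intro h
    refine ⟨PowerSeries.mk fun n => PowerSeries.mk fun m =>
      PowerSeries.coeff (R := ℂ) (m + 1) (PowerSeries.coeff (R := AA) n b), ?_⟩
    apply PowerSeries.ext; intro n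
    rw [xx, PowerSeries.coeff_C_mul]
    apply PowerSeries.ext; intro m
    cases m with
    | zero =>
      rw [PowerSeries.coeff_zero_eq_constantCoeff, map_mul, PowerSeries.constantCoeff_X, zero_mul]
      exact (h n).symm ▸ (h n).symm
    | succ m =>
      rw [PowerSeries.coeff_succ_X_mul]
      simp
lemma xx_ne_zero : xx ≠ 0 := by
  intro h
  have := congrArg (PowerSeries.coeff (R := AA) 0) h
  rw [xx, PowerSeries.coeff_zero_C, map_zero] at this
  exact PowerSeries.X_ne_zero this
lemma xx_not_unit : ¬ IsUnit xx := by
  rw [xx, PowerSeries.isUnit_iff_constantCoeff, PowerSeries.constantCoeff_C,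
    PowerSeries.isUnit_iff_constantCoeff, PowerSeries.constantCoeff_X]
  exact not_isUnit_zero
def eps : BB →+* PowerSeries ℂ := PowerSeries.map (PowerSeries.constantCoeff (R := ℂ))
lemma eps_eq_zero_iff (b : BB) : eps b = 0 ↔ ∀ n, PowerSeries.constantCoeff (R := ℂ) (PowerSeries.coeff (R := AA) n b) = 0 := by
  constructor
  · intro h n
    have := congrArg (PowerSeries.coeff (R := ℂ) n) h
    rwa [eps, PowerSeries.coeff_map, map_zero] at this
  · intro h
    apply PowerSeries.ext; intro n
    rw [eps, PowerSeries.coeff_map, map_zero]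
    exact h n
lemma xx_dvd_iff_eps (b : BB) : xx ∣ b ↔ eps b = 0 := by
  rw [xx_dvd_iff, eps_eq_zero_iff]
lemma xx_prime : Prime xx := by
  refine ⟨xx_ne_zero, xx_not_unit, ?_⟩
  intro a b hab
  rw [xx_dvd_iff_eps] at hab ⊢
  rw [xx_dvd_iff_eps (b := b)]
  rw [map_mul] at hab
  exact mul_eq_zero.mp hab

lemma xpow_extract (p : BB) (hp : p ≠ 0) : ∃ α p₁, p = xx ^ α * p₁ ∧ ¬ xx ∣ p₁ := by
  have hex : ∃ k, ¬ xx ^ (k + 1) ∣ p := by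
    have : ∃ n, PowerSeries.coeff (R := AA) n p ≠ 0 := by
      by_contra hc
      push_neg at hc
      exact hp (PowerSeries.ext hc)
    obtain ⟨n, hn⟩ := this
    have : ∃ m, PowerSeries.coeff (R := ℂ) m (PowerSeries.coeff (R := AA) n p) ≠ 0 := by
      by_contra hc
      push_neg at hc
      exact hn (PowerSeries.ext hc)
    obtain ⟨m, hm⟩ := this
    refine ⟨m, ?_⟩
    rintro ⟨c, hc⟩
    have hxc : xx ^ (m + 1) = PowerSeries.C (R := AA) ((PowerSeries.X : AA) ^ (m + 1)) := by
      rw [xx, map_pow]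
    rw [hxc] at hc
    have := congrArg (PowerSeries.coeff (R := AA) n) hc
    rw [PowerSeries.coeff_C_mul] at this
    have hdvd : (PowerSeries.X : AA) ^ (m+1) ∣ PowerSeries.coeff (R := AA) n p :=
      ⟨PowerSeries.coeff (R := AA) n c, this⟩
    exact hm (PowerSeries.X_pow_dvd_iff.mp hdvd m (Nat.lt_succ_self m))
  classical
  set α := Nat.find hex with hα
  have hspec : ¬ xx ^ (α + 1) ∣ p := Nat.find_spec hex
  have hdvd : xx ^ α ∣ p := by
    cases h : α with
    | zero => simp
    | succ β =>
      have : ¬ ¬ xx ^ (β + 1) ∣ p := by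
        intro hcon
        have := Nat.find_min hex (m := β) (by omega)
        exact this hcon
      rw [h] at *
      push_neg at this
      exact this
  obtain ⟨p₁, hp₁⟩ := hdvd
  refine ⟨α, p₁, hp₁, ?_⟩
  rintro ⟨c, rfl⟩
  exact hspec ⟨c, by rw [hp₁]; ring⟩

-- ### cast lemmas for polynomials

lemma coe_trunc_eq {b : BB} {d : ℕ} (h : sh d b = 0) :
    ((PowerSeries.trunc d b : Polynomial AA) : BB) = b := by
  apply PowerSeries.ext; intro n
  rw [Polynomial.coeff_coe, PowerSeries.coeff_trunc]
  split
  · rfl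
  · have hn : d ≤ n := Nat.not_lt.mp ‹_›
    obtain ⟨k, rfl⟩ := Nat.exists_eq_add_of_le hn
    have := congrArg (PowerSeries.coeff (R := AA) k) h
    rw [coeff_sh, map_zero] at this
    rw [Nat.add_comm k d] at this
    exact this.symm

lemma sh_coe_poly (P : Polynomial AA) (d : ℕ) (h : P.degree < d) : sh d ((P : BB)) = 0 := by
  apply PowerSeries.ext; intro n
  rw [coeff_sh, Polynomial.coeff_coe, map_zero]
  exact Polynomial.coeff_eq_zero_of_degree_lt (lt_of_lt_of_le h (by exact_mod_cast Nat.le_add_left d n))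

-- ### main Euclid lemma for regular elements

lemma polyAA_euclid {P Q R : Polynomial AA} (h : IsRelPrime P Q) (hd : P ∣ Q * R) : P ∣ R :=
  IsRelPrime.dvd_of_dvd_mul_left h hd

theorem euclidReg (p₁ q a₁ : BB) (hreg : ¬ xx ∣ p₁) (hpq : IsRelPrime p₁ q)
    (hdvd : p₁ ∣ a₁ * q) : p₁ ∣ a₁ := by
  classical
  -- the order d of the reduction of p₁
  have hepsne : eps p₁ ≠ 0 := by
    intro h; exact hreg ((xx_dvd_iff_eps p₁).mpr h)
  have hexn : ∃ n, PowerSeries.constantCoeff (R := ℂ) (PowerSeries.coeff (R := AA) n p₁) ≠ 0 := by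
    by_contra hc
    push_neg at hc
    exact hepsne ((eps_eq_zero_iff p₁).mpr hc)
  set d := Nat.find hexn with hd
  have h2' : PowerSeries.constantCoeff (R := ℂ) (PowerSeries.coeff (R := AA) d p₁) ≠ 0 := Nat.find_spec hexn
  have h1 : ∀ j, j < d → (PowerSeries.X : AA) ∣ PowerSeries.coeff (R := AA) j p₁ := by
    intro j hj
    rw [PowerSeries.X_dvd_iff]
    by_contra hc
    exact (Nat.find_min hexn hj) hc
  have h2 : IsUnit (PowerSeries.coeff (R := AA) d p₁) := by
    rw [PowerSeries.isUnit_iff_constantCoeff]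
    exact isUnit_iff_ne_zero.mpr h2'
  -- Weierstrass preparation
  obtain ⟨w, ρ, hXd, hρ⟩ := wdiv p₁ d h1 h2 ((PowerSeries.X : BB) ^ d)
  set Pb : BB := (PowerSeries.X : BB) ^ d - ρ with hPb
  have hPw : Pb = w * p₁ := by rw [hPb]; linear_combination hXd
  -- w is a unit
  have hwu : IsUnit w := by
    have hcd : (1 : AA) = PowerSeries.coeff (R := AA) d (w * p₁) + PowerSeries.coeff (R := AA) d ρ := by
      have := congrArg (PowerSeries.coeff (R := AA) d) hXd
      rw [PowerSeries.coeff_X_pow, if_pos rfl, map_add] at this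
      exact this
    have hρd : PowerSeries.coeff (R := AA) d ρ = 0 := by
      have := congrArg (PowerSeries.coeff (R := AA) 0) hρ
      rw [coeff_sh, Nat.zero_add, map_zero] at this
      exact this
    rw [hρd, add_zero, PowerSeries.coeff_mul] at hcd
    have hcc := congrArg (PowerSeries.constantCoeff (R := ℂ)) hcd
    rw [map_one, map_sum] at hcc
    rw [Finset.sum_eq_single (0, d)] at hcc
    · rw [map_mul] at hcc
      have : PowerSeries.constantCoeff (R := ℂ) (PowerSeries.coeff (R := AA) 0 w) ≠ 0 := by
        intro h0
        rw [h0, zero_mul] at hcc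
        exact one_ne_zero hcc
      rw [PowerSeries.isUnit_iff_constantCoeff, ← PowerSeries.coeff_zero_eq_constantCoeff_apply,
        PowerSeries.isUnit_iff_constantCoeff]
      exact isUnit_iff_ne_zero.mpr this
    · rintro ⟨i, j⟩ hij hne
      rw [Finset.HasAntidiagonal.mem_antidiagonal] at hij
      have hjd : j < d := by
        rcases Nat.lt_or_ge j d with h | h
        · exact h
        · exfalso; apply hne
          have : j = d := by omega
          subst this
          have : i = 0 := by omega
          subst this; rfl
      rw [map_mul]
      have : PowerSeries.constantCoeff (R := ℂ) (PowerSeries.coeff (R := AA) j p₁) = 0 := by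
        have := h1 j hjd
        rwa [PowerSeries.X_dvd_iff] at this
      rw [this, mul_zero]
    · intro hmem
      exfalso
      exact hmem (Finset.HasAntidiagonal.mem_antidiagonal.mpr (Nat.zero_add d))
  obtain ⟨winv, hwinv⟩ := hwu.exists_right_inv
  -- ρ has all coefficients divisible by PowerSeries.X
  have hρx : ∀ n, (PowerSeries.X : AA) ∣ PowerSeries.coeff (R := AA) n ρ := by
    intro n
    rcases Nat.lt_or_ge n d with hn | hn
    · rw [PowerSeries.X_dvd_iff]
      have hρe : ρ = (PowerSeries.X : BB) ^ d - w * p₁ := by linear_combination -hXd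
      have := congrArg (fun z => PowerSeries.constantCoeff (R := ℂ) (PowerSeries.coeff (R := AA) n z)) hρe
      simp only [map_sub] at this
      rw [this]
      rw [PowerSeries.coeff_X_pow, if_neg (by omega), map_zero, zero_sub, neg_eq_zero]
      rw [PowerSeries.coeff_mul, map_sum]
      refine Finset.sum_eq_zero ?_
      rintro ⟨i, j⟩ hij
      rw [Finset.HasAntidiagonal.mem_antidiagonal] at hij
      have hjd : j < d := by omega
      rw [map_mul]
      have : PowerSeries.constantCoeff (R := ℂ) (PowerSeries.coeff (R := AA) j p₁) = 0 := by
        have := h1 j hjd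
        rwa [PowerSeries.X_dvd_iff] at this
      rw [this, mul_zero]
    · obtain ⟨k, rfl⟩ := Nat.exists_eq_add_of_le hn
      have := congrArg (PowerSeries.coeff (R := AA) k) hρ
      rw [coeff_sh, map_zero, Nat.add_comm k d] at this
      rw [this]
      exact dvd_zero _
  -- Pb satisfies the Weierstrass hypotheses
  have h1P : ∀ j, j < d → (PowerSeries.X : AA) ∣ PowerSeries.coeff (R := AA) j Pb := by
    intro j hj
    rw [hPb, map_sub, PowerSeries.coeff_X_pow, if_neg (by omega), zero_sub]
    exact (hρx j).neg_right
  have h2P : IsUnit (PowerSeries.coeff (R := AA) d Pb) := by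
    rw [hPb, map_sub, PowerSeries.coeff_X_pow, if_pos rfl]
    have hρd : PowerSeries.coeff (R := AA) d ρ = 0 := by
      have := congrArg (PowerSeries.coeff (R := AA) 0) hρ
      rw [coeff_sh, Nat.zero_add, map_zero] at this
      exact this
    rw [hρd, sub_zero]
    exact isUnit_one
  -- the Weierstrass polynomial
  set P : Polynomial AA := Polynomial.X ^ d - PowerSeries.trunc d ρ with hPdef
  have hcast : (P : BB) = Pb := by
    rw [hPdef, hPb]
    push_cast
    rw [coe_trunc_eq hρ]
  have hdegtr : (PowerSeries.trunc d ρ).degree < (d : WithBot ℕ) := PowerSeries.degree_trunc_lt ρ d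
  have hPmonic : P.Monic := by
    rw [hPdef]
    have : (PowerSeries.trunc d ρ).degree < (Polynomial.X ^ d : Polynomial AA).degree := by
      rwa [Polynomial.degree_X_pow]
    exact (Polynomial.monic_X_pow d).sub_of_left this
  have hPdeg : P.degree = d := by
    rw [hPdef]
    rw [sub_eq_add_neg]
    rw [Polynomial.degree_add_eq_left_of_degree_lt]
    · exact Polynomial.degree_X_pow d
    · rwa [Polynomial.degree_neg, Polynomial.degree_X_pow]
  -- divisions of a₁ and q
  obtain ⟨u, r, hu, hr⟩ := wdiv p₁ d h1 h2 a₁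
  obtain ⟨s, Q, hq, hQ⟩ := wdiv p₁ d h1 h2 q
  set rpoly := PowerSeries.trunc d r with hrp
  set Qpoly := PowerSeries.trunc d Q with hQp
  have hrc : ((rpoly : Polynomial AA) : BB) = r := coe_trunc_eq hr
  have hQc : ((Qpoly : Polynomial AA) : BB) = Q := coe_trunc_eq hQ
  obtain ⟨t, ht⟩ := hdvd
  -- r * Q is divisible by p₁, hence by Pb
  have hrQ : r * Q = Pb * (winv * (t - a₁ * s - u * q + u * s * p₁)) := by
    have e1 : r = a₁ - u * p₁ := by linear_combination -hu
    have e2 : Q = q - s * p₁ := by linear_combination -hq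
    have e3 : winv * Pb = p₁ := by
      rw [hPw]
      calc winv * (w * p₁) = (w * winv) * p₁ := by ring
      _ = p₁ := by rw [hwinv, one_mul]
    calc r * Q = a₁ * q - a₁ * s * p₁ - u * q * p₁ + u * s * p₁ * p₁ := by
          rw [e1, e2]; ring
    _ = p₁ * (t - a₁ * s - u * q + u * s * p₁) := by rw [ht]; ring
    _ = Pb * (winv * (t - a₁ * s - u * q + u * s * p₁)) := by rw [← e3]; ring
  -- transfer divisibility to the polynomial ring
  have hPdvdPoly : P ∣ rpoly * Qpoly := by
    rw [← Polynomial.modByMonic_eq_zero_iff_dvd hPmonic]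
    set m := (rpoly * Qpoly) %ₘ P with hm
    set D := (rpoly * Qpoly) /ₘ P with hD
    have hdiv : rpoly * Qpoly = P * D + m := by
      rw [hm, hD]
      linear_combination -(Polynomial.modByMonic_add_div (rpoly * Qpoly) P)
    have hdegm : m.degree < (d : WithBot ℕ) := by
      rw [hm, ← hPdeg]
      exact Polynomial.degree_modByMonic_lt _ hPmonic
    -- cast to BB
    have hdivB : r * Q = (D : BB) * Pb + (m : BB) := by
      have := congrArg (fun z => ((z : Polynomial AA) : BB)) hdiv
      push_cast at this
      rw [hrc, hQc, hcast] at this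
      rw [this]; ring
    have hsh0 : sh d (0 : BB) = 0 := by apply PowerSeries.ext; intro n; simp [sh]
    have heq2 : (winv * (t - a₁ * s - u * q + u * s * p₁)) * Pb + 0 = (D : BB) * Pb + (m : BB) := by
      rw [add_zero, mul_comm, ← hrQ, hdivB]
    have huniq := wuniq Pb d h1P h2P heq2 hsh0 (sh_coe_poly m d hdegm)
    have hm0 : ((m : Polynomial AA) : BB) = 0 := huniq.2.symm
    exact_mod_cast hm0
  -- coprimality of P and Qpoly
  have hcop : IsRelPrime P Qpoly := by
    intro D hDP hDQ
    -- leading coefficient of D is a unit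
    obtain ⟨E0, hE0⟩ := id hDP
    have hlc : D.leadingCoeff * E0.leadingCoeff = 1 := by
      have h5 := congrArg Polynomial.leadingCoeff hE0
      rw [hPmonic.leadingCoeff, Polynomial.leadingCoeff_mul] at h5
      exact h5.symm
    have hlcu : IsUnit D.leadingCoeff := IsUnit.of_mul_eq_one _ hlc
    obtain ⟨lcu, hlcu'⟩ := hlcu
    set D' : Polynomial AA := Polynomial.C ((lcu⁻¹ : AAˣ) : AA) * D with hD'
    have hD'monic : D'.Monic := by
      rw [Polynomial.Monic, hD', Polynomial.leadingCoeff_mul, Polynomial.leadingCoeff_C, ← hlcu']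
      exact Units.inv_mul lcu
    have hDD' : Polynomial.C ((lcu : AA)) * D' = D := by
      rw [hD', ← mul_assoc, ← Polynomial.C_mul, Units.mul_inv, Polynomial.C_1, one_mul]
    have hD'dvdP : D' ∣ P := by
      obtain ⟨E, hE⟩ := hDP
      refine ⟨Polynomial.C ((lcu : AA)) * E, ?_⟩
      rw [hE, ← hDD']
      ring
    have hD'dvdQ : D' ∣ Qpoly := by
      obtain ⟨E, hE⟩ := hDQ
      refine ⟨Polynomial.C ((lcu : AA)) * E, ?_⟩
      rw [hE, ← hDD']
      ring
    -- reduction of D' mod x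
    have hPmap : P.map (PowerSeries.constantCoeff (R := ℂ)) = Polynomial.X ^ d := by
      rw [hPdef, Polynomial.map_sub, Polynomial.map_pow, Polynomial.map_X]
      suffices htr0 : (PowerSeries.trunc d ρ).map (PowerSeries.constantCoeff (R := ℂ)) = 0 by
        rw [htr0, sub_zero]
      apply Polynomial.ext
      intro n
      rw [Polynomial.coeff_map, PowerSeries.coeff_trunc, Polynomial.coeff_zero]
      split
      · have := hρx n
        rwa [PowerSeries.X_dvd_iff] at this
      · exact map_zero _
    have hD'map : (D'.map (PowerSeries.constantCoeff (R := ℂ))) ∣ Polynomial.X ^ d := by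
      rw [← hPmap]
      exact Polynomial.map_dvd _ hD'dvdP
    obtain ⟨i, hid, hassoc⟩ := (dvd_prime_pow Polynomial.prime_X d).mp hD'map
    have hXi : D'.map (PowerSeries.constantCoeff (R := ℂ)) = Polynomial.X ^ i :=
      Polynomial.eq_of_monic_of_associated (hD'monic.map _) (Polynomial.monic_X_pow i) hassoc
    have hi0 : i = 0 := by
      by_contra hne
      have e3 : winv * Pb = p₁ := by
        rw [hPw]
        calc winv * (w * p₁) = (w * winv) * p₁ := by ring
        _ = p₁ := by rw [hwinv, one_mul]
      have hD'B_P : ((D' : Polynomial AA) : BB) ∣ Pb := by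
        rw [← hcast]
        obtain ⟨E, hE⟩ := hD'dvdP
        exact ⟨(E : BB), by rw [hE]; push_cast; ring⟩
      have hD'B_p : ((D' : Polynomial AA) : BB) ∣ p₁ := by
        rw [← e3]
        exact hD'B_P.mul_left winv
      have hD'B_q : ((D' : Polynomial AA) : BB) ∣ q := by
        have h4 : ((D' : Polynomial AA) : BB) ∣ Q := by
          rw [← hQc]
          obtain ⟨E, hE⟩ := hD'dvdQ
          exact ⟨(E : BB), by rw [hE]; push_cast; ring⟩
        have := dvd_add (hD'B_p.mul_left s) h4
        rwa [← hq] at this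
      have hunit := hpq hD'B_p hD'B_q
      have hc0 : PowerSeries.constantCoeff (R := AA) ((D' : Polynomial AA) : BB) = D'.coeff 0 := by
        rw [← PowerSeries.coeff_zero_eq_constantCoeff_apply, Polynomial.coeff_coe]
      have hcc0 : PowerSeries.constantCoeff (R := ℂ) (D'.coeff 0) = 0 := by
        have := congrArg (fun z => Polynomial.coeff z 0) hXi
        simp only [Polynomial.coeff_map] at this
        rw [this, Polynomial.coeff_X_pow, if_neg (by omega)]
      rw [PowerSeries.isUnit_iff_constantCoeff, hc0,
        PowerSeries.isUnit_iff_constantCoeff, hcc0] at hunit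
      exact not_isUnit_zero hunit
    have hdeg0 : D'.natDegree = 0 := by
      have hnd := congrArg Polynomial.natDegree hXi
      rw [hD'monic.natDegree_map, hi0, pow_zero, Polynomial.natDegree_one] at hnd
      exact hnd
    have hD'1 : D' = 1 := hD'monic.natDegree_eq_zero.mp hdeg0
    rw [← hDD', hD'1, mul_one]
    exact Polynomial.isUnit_C.mpr lcu.isUnit
  -- conclude
  have hPr : P ∣ rpoly := polyAA_euclid hcop (by rwa [mul_comm] at hPdvdPoly)
  have hr0 : rpoly = 0 := by
    refine Polynomial.eq_zero_of_dvd_of_degree_lt hPr ?_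
    rw [hPdeg]
    exact PowerSeries.degree_trunc_lt r d
  have hrB : r = 0 := by rw [← hrc, hr0]; simp
  rw [hrB, add_zero] at hu
  exact ⟨u, by rw [hu]; ring⟩

theorem euclidB (p q a : BB) (hpq : IsRelPrime p q) (h : p ∣ a * q) : p ∣ a := by
  by_cases hp0 : p = 0
  · subst hp0
    have haq : a * q = 0 := zero_dvd_iff.mp h
    have hqu : IsUnit q := isRelPrime_zero_left.mp hpq
    have hq0 : q ≠ 0 := hqu.ne_zero
    rcases mul_eq_zero.mp haq with h | h
    · rw [h]
    · exact absurd h hq0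
  obtain ⟨α, p₁, hp₁, hreg⟩ := xpow_extract p hp0
  have hp₁q : IsRelPrime p₁ q := hpq.of_dvd_left ⟨xx ^ α, by rw [hp₁]; ring⟩
  have hxa : xx ^ α ∣ a := by
    rcases Nat.eq_zero_or_pos α with h0 | hpos
    · rw [h0, pow_zero]; exact one_dvd a
    · have hxq : ¬ xx ∣ q := by
        intro hq
        have hxp : xx ∣ p := by
          rw [hp₁]
          exact Dvd.dvd.mul_right (dvd_pow_self xx (by omega)) p₁
        exact xx_not_unit (hpq hxp hq)
      refine xx_prime.pow_dvd_of_dvd_mul_right α hxq ?_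
      calc xx ^ α ∣ p := ⟨p₁, hp₁⟩
        _ ∣ a * q := h
  obtain ⟨a₁, ha₁⟩ := hxa
  obtain ⟨t, ht⟩ := h
  have hxne : xx ^ α ≠ 0 := pow_ne_zero α xx_ne_zero
  have hcancel : a₁ * q = p₁ * t := by
    have : xx ^ α * (a₁ * q) = xx ^ α * (p₁ * t) := by
      calc xx ^ α * (a₁ * q) = (xx ^ α * a₁) * q := by ring
        _ = a * q := by rw [← ha₁]
        _ = p * t := ht
        _ = xx ^ α * (p₁ * t) := by rw [hp₁]; ring
    exact mul_left_cancel₀ hxne this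
  have hfin : p₁ ∣ a₁ := euclidReg p₁ q a₁ hreg hp₁q ⟨t, hcancel⟩
  rw [hp₁, ha₁]
  exact mul_dvd_mul_left (xx ^ α) hfin

end W

theorem euclidPS (p q a : PS) (hpq : IsRelPrime p q) (h : p ∣ a * q) : p ∣ a := by
  set e := Bridge.theIso with he
  have hd : e p ∣ e a * e q := by
    rw [← map_mul]
    exact map_dvd e h
  have hpq' : IsRelPrime (e p) (e q) := by
    intro w h1 h2
    have h1' : e.symm w ∣ p := by
      have := map_dvd e.symm h1
      rwa [RingEquiv.symm_apply_apply] at this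
    have h2' : e.symm w ∣ q := by
      have := map_dvd e.symm h2
      rwa [RingEquiv.symm_apply_apply] at this
    have hu := hpq h1' h2'
    have := hu.map e
    rwa [RingEquiv.apply_symm_apply] at this
  obtain ⟨c, hc⟩ := W.euclidB (e p) (e q) (e a) hpq' hd
  refine ⟨e.symm c, ?_⟩
  have : e.symm (e a) = e.symm (e p * c) := congrArg e.symm hc
  rwa [RingEquiv.symm_apply_apply, map_mul, RingEquiv.symm_apply_apply] at this

theorem key (p q A B : PS) (hpq : IsRelPrime p q) (h : A * q = B * p) :
    ∃ c, A = c * p ∧ B = c * q := by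
  by_cases hp0 : p = 0
  · subst hp0
    have hqu : IsUnit q := isRelPrime_zero_left.mp hpq
    obtain ⟨v, hv⟩ := hqu.exists_right_inv
    have hA : A = 0 := by
      have hAq : A * q = 0 := by rw [h, mul_zero]
      rcases mul_eq_zero.mp hAq with h' | h'
      · exact h'
      · exact absurd h' hqu.ne_zero
    refine ⟨B * v, by rw [hA, mul_zero], ?_⟩
    calc B = B * (q * v) := by rw [hv, mul_one]
      _ = B * v * q := by ring
  · have hdvd : p ∣ A * q := ⟨B, by rw [h]; ring⟩
    obtain ⟨c, hc⟩ := euclidPS p q A hpq hdvd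
    refine ⟨c, by rw [hc]; ring, ?_⟩
    have : p * (c * q) = p * B := by
      calc p * (c * q) = (p * c) * q := by ring
        _ = A * q := by rw [← hc]
        _ = B * p := h
        _ = p * B := by ring
    have := mul_left_cancel₀ hp0 this
    exact this.symm


section Plumb

variable (f : PS)

/-- quotient -/
noncomputable def quo (ω : PS × PS) : PS :=
  @dite _ (∃ c : PS, wedge ω (dd f) = c * f) (Classical.dec _) (fun h => h.choose) (fun _ => 0)

theorem quo_spec {ω : PS × PS} (hω : ω ∈ SaitoSet f) :
    wedge ω (dd f) = quo f ω * f := by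
  classical
  have hω' : ∃ c : PS, wedge ω (dd f) = c * f := hω
  rw [quo, dif_pos hω']
  exact hω'.choose_spec

theorem quo_eq (hf0 : f ≠ 0) {ω : PS × PS} {c : PS} (h : wedge ω (dd f) = c * f) :
    quo f ω = c := by
  have h1 := quo_spec f ⟨c, h⟩
  exact mul_right_cancel₀ hf0 (h1.symm.trans h)

end Plumb

theorem colon_iso_torsion (f : PS) (hf : Squarefree f)
    (hcop : IsRelPrime (pd 0 f) (pd 1 f))
    (J Jf : Ideal PS)
    (hJ : J = Ideal.span {pd 0 f, pd 1 f})
    (hJf : Jf = Submodule.colon J (Ideal.span {f})) :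
    ∃ φ : ((Jf.restrictScalars ℂ) ⧸
            ((J.restrictScalars ℂ).comap (Jf.restrictScalars ℂ).subtype))
          ≃ₗ[ℂ]
          (((SaitoMod f).restrictScalars ℂ) ⧸
            (((FMod f).restrictScalars ℂ).comap ((SaitoMod f).restrictScalars ℂ).subtype)),
      ∀ (h : PS) (hh : h ∈ Jf.restrictScalars ℂ) (A B : PS),
        h * f = A * pd 1 f - B * pd 0 f →
        ∀ hAB : (A, B) ∈ (SaitoMod f).restrictScalars ℂ,
          φ (Submodule.Quotient.mk ⟨h, hh⟩) = Submodule.Quotient.mk ⟨(A, B), hAB⟩ := by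
  have hf0 : f ≠ 0 := hf.ne_zero
  set p := pd 0 f with hp
  set q := pd 1 f with hq
  -- membership characterizations
  have memJf : ∀ h : PS, h ∈ Jf ↔ h * f ∈ J := by
    intro h
    rw [hJf, Submodule.mem_colon]
    constructor
    · intro H; simpa [smul_eq_mul] using H f (Ideal.mem_span_singleton_self f)
    · intro H s hs
      obtain ⟨c, rfl⟩ := Ideal.mem_span_singleton'.mp hs
      rw [smul_eq_mul]
      convert J.mul_mem_left c H using 1
      ring
  have memJ : ∀ h : PS, h ∈ J ↔ ∃ a b, a * p + b * q = h := by
    intro h; rw [hJ, Ideal.mem_span_pair]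
  -- the map Ψ
  have memJf' : ∀ ω : (SaitoMod f).restrictScalars ℂ, quo f ↑ω ∈ Jf := by
    intro ω
    rw [memJf, ← quo_spec f ω.2]
    rw [memJ]
    exact ⟨-(ω : PS × PS).2, (ω : PS × PS).1, by simp [wedge, dd, ← hp, ← hq]; ring⟩
  set Ψ : ((SaitoMod f).restrictScalars ℂ) →ₗ[ℂ] (Jf.restrictScalars ℂ) :=
    { toFun := fun ω => ⟨quo f ↑ω, memJf' ω⟩
      map_add' := by
        intro ω₁ ω₂
        refine Subtype.ext ?_
        refine quo_eq f hf0 ?_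
        have e1 := quo_spec f ω₁.2
        have e2 := quo_spec f ω₂.2
        simp only [Submodule.coe_add]
        simp only [wedge, Prod.fst_add, Prod.snd_add] at *
        ring_nf
        ring_nf at e1 e2
        linear_combination e1 + e2
      map_smul' := by
        intro c ω
        refine Subtype.ext ?_
        refine quo_eq f hf0 ?_
        have e1 := quo_spec f ω.2
        simp only [Submodule.coe_smul, wedge, Prod.smul_fst, Prod.smul_snd,
          smul_mul_assoc, ← smul_sub] at *
        rw [e1]; rfl } with hΨ
  have Ψval : ∀ ω : (SaitoMod f).restrictScalars ℂ, (Ψ ω : PS) = quo f ↑ω := fun _ => rfl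
  -- Ψ maps F into J
  have hle : ((FMod f).restrictScalars ℂ).comap ((SaitoMod f).restrictScalars ℂ).subtype ≤
      Submodule.comap Ψ ((J.restrictScalars ℂ).comap (Jf.restrictScalars ℂ).subtype) := by
    rintro ω hω
    obtain ⟨c, η, hcη⟩ := hω
    simp only [Submodule.subtype_apply] at hcη
    simp only [Submodule.mem_comap, Submodule.subtype_apply, Submodule.restrictScalars_mem, Ψval]
    have : wedge ↑ω (dd f) = (η.1 * q - η.2 * p) * f := by
      rw [hcη]
      simp only [wedge, dd, Prod.fst_add, Prod.snd_add, Prod.smul_fst, Prod.smul_snd,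
        smul_eq_mul, ← hp, ← hq]
      ring
    rw [quo_eq f hf0 this, memJ]
    exact ⟨-η.2, η.1, by ring⟩
  set Ψq := Submodule.mapQ _ _ Ψ hle with hΨq
  have hsurj : Function.Surjective Ψq := by
    intro z
    obtain ⟨⟨h, hh⟩, rfl⟩ := Submodule.Quotient.mk_surjective _ z
    have hh' : h * f ∈ J := (memJf h).1 hh
    obtain ⟨a, b, hab⟩ := (memJ (h * f)).1 hh'
    have hmem : (b, -a) ∈ SaitoMod f := by
      refine ⟨h, ?_⟩
      simp only [wedge, dd, ← hp, ← hq]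
      linear_combination hab
    refine ⟨Submodule.Quotient.mk ⟨(b, -a), hmem⟩, ?_⟩
    rw [hΨq, Submodule.mapQ_apply]
    congr 1
    refine Subtype.ext ?_
    rw [Ψval]
    refine quo_eq f hf0 ?_
    simp only [wedge, dd, ← hp, ← hq]
    linear_combination hab
  have hinj : Function.Injective Ψq := by
    rw [← LinearMap.ker_eq_bot, LinearMap.ker_eq_bot']
    intro z hz
    obtain ⟨ω, rfl⟩ := Submodule.Quotient.mk_surjective _ z
    rw [hΨq, Submodule.mapQ_apply, Submodule.Quotient.mk_eq_zero] at hz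
    rw [Submodule.Quotient.mk_eq_zero]
    simp only [Submodule.mem_comap, Submodule.subtype_apply, Submodule.restrictScalars_mem,
      Ψval] at hz ⊢
    obtain ⟨a, b, hab⟩ := (memJ _).1 hz
    have hw := quo_spec f ω.2
    set A₀ := (ω : PS × PS).1 - b * f with hA₀
    set B₀ := (ω : PS × PS).2 + a * f with hB₀
    have hkey : A₀ * q = B₀ * p := by
      rw [hA₀, hB₀]
      have : wedge ↑ω (dd f) = (a * p + b * q) * f := by rw [hw, hab]
      simp only [wedge, dd, ← hp, ← hq] at this
      linear_combination this
    obtain ⟨c, hc1, hc2⟩ := key p q A₀ B₀ hcop hkey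
    refine ⟨c, (b, -a), ?_⟩
    have e1 : (ω : PS × PS).1 = c * p + f * b := by
      have := hc1; rw [hA₀] at this; linear_combination this
    have e2 : (ω : PS × PS).2 = c * q + f * (-a) := by
      have := hc2; rw [hB₀] at this; linear_combination this
    refine Prod.ext ?_ ?_
    · simpa [dd, ← hp, ← hq, smul_eq_mul] using e1
    · simpa [dd, ← hp, ← hq, smul_eq_mul] using e2
  refine ⟨(LinearEquiv.ofBijective Ψq ⟨hinj, hsurj⟩).symm, ?_⟩
  intro h hh A B heq hAB
  rw [LinearEquiv.symm_apply_eq]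
  change _ = Ψq _
  rw [hΨq, Submodule.mapQ_apply]
  congr 1
  refine Subtype.ext ?_
  rw [Ψval]
  refine (quo_eq f hf0 ?_).symm
  simp only [wedge, dd, ← hp, ← hq]
  linear_combination -heq
end
end

section
/- Let f ∈ ℂ{x,y} be reduced with multiplicity m(f) > 1 (i.e., f ∈ ⟨x,y⟩²). If there exists ω ∈ S(f) whose cofactor h (with ω ∧ df = h·f·dx∧dy) is a unit, then {ω, df} is a Saito basis of S(f), i.e., ω ∧ df = u·f·dx∧dy with u a unit. Conversely, if {ω₁, ω₂} is a Saito basis of S(f) with ω₂ ∈ F(f), say ω₂ = h₁·df + f·(C dx + D dy), and ω₁ = A dx + B dy, then the cofactor of ω₁ is a unit. -/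
open MvPowerSeries

noncomputable section

open Finset

abbrev R1 := PowerSeries ℂ
abbrev W := PowerSeries R1

-- helpers on Fin 2 Finsupps
lemma fin2_eq_or (a b c : Fin 2) (hab : a ≠ b) : c = a ∨ c = b := by
  omega

lemma finsupp_fin2_decomp (a b : Fin 2) (hab : a ≠ b) (m : Fin 2 →₀ ℕ) :
    m = Finsupp.single a (m a) + Finsupp.single b (m b) := by
  ext c
  rcases fin2_eq_or a b c hab with rfl | rfl <;>
    simp [Finsupp.single_apply, hab, hab.symm]

lemma single_add_single_apply (a b : Fin 2) (hab : a ≠ b) (i j : ℕ) :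
    (Finsupp.single a i + Finsupp.single b j) a = i ∧
    (Finsupp.single a i + Finsupp.single b j) b = j := by
  constructor <;> simp [Finsupp.single_apply, hab, hab.symm]

lemma coeff_derivativeFun' {R : Type*} [CommSemiring R] (f : PowerSeries R) (n : ℕ) :
    PowerSeries.coeff n (PowerSeries.derivativeFun f) = PowerSeries.coeff (n + 1) f * (n + 1) :=
  PowerSeries.coeff_derivative f n

lemma derivativeFun_C' {R : Type*} [CommSemiring R] (r : R) :
    PowerSeries.derivativeFun (PowerSeries.C r) = 0 :=
  PowerSeries.derivative_C

end
noncomputable section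
open PowerSeries

variable (a b : Fin 2) (hab : a ≠ b)

/-- The splitting map `PS → ℂ⟦X⟧⟦X⟧`, variable `a` outer, `b` inner. -/
def phiFun (p : PS) : W :=
  PowerSeries.mk fun i => PowerSeries.mk fun j =>
    MvPowerSeries.coeff (R := ℂ) (Finsupp.single a i + Finsupp.single b j) p

def psiFun (P : W) : PS :=
  fun m => PowerSeries.coeff (R := ℂ) (m b) (PowerSeries.coeff (R := R1) (m a) P)

lemma coeff_phiFun (p : PS) (i j : ℕ) :
    PowerSeries.coeff (R := ℂ) j (PowerSeries.coeff (R := R1) i (phiFun a b p)) =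
      MvPowerSeries.coeff (R := ℂ) (Finsupp.single a i + Finsupp.single b j) p := by
  simp [phiFun]

lemma coeff_psiFun (P : W) (m : Fin 2 →₀ ℕ) :
    MvPowerSeries.coeff (R := ℂ) m (psiFun a b P) =
      PowerSeries.coeff (R := ℂ) (m b) (PowerSeries.coeff (R := R1) (m a) P) := rfl

include hab

lemma phiFun_psiFun (P : W) : phiFun a b (psiFun a b P) = P := by
  ext i j
  rw [coeff_phiFun, coeff_psiFun]
  rw [(single_add_single_apply a b hab i j).1, (single_add_single_apply a b hab i j).2]

lemma psiFun_phiFun (p : PS) : psiFun a b (phiFun a b p) = p := by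
  ext m
  rw [coeff_psiFun, coeff_phiFun, ← finsupp_fin2_decomp a b hab m]

lemma phiFun_mul (p q : PS) : phiFun a b (p * q) = phiFun a b p * phiFun a b q := by
  ext n j
  rw [coeff_phiFun, MvPowerSeries.coeff_mul, PowerSeries.coeff_mul, map_sum]
  have : ∀ x ∈ Finset.HasAntidiagonal.antidiagonal n,
      PowerSeries.coeff (R := ℂ) j (PowerSeries.coeff (R := R1) x.1 (phiFun a b p) *
        PowerSeries.coeff (R := R1) x.2 (phiFun a b q)) =
      ∑ y ∈ Finset.HasAntidiagonal.antidiagonal j,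
        MvPowerSeries.coeff (R := ℂ) (Finsupp.single a x.1 + Finsupp.single b y.1) p *
        MvPowerSeries.coeff (R := ℂ) (Finsupp.single a x.2 + Finsupp.single b y.2) q := by
    intro x hx
    rw [PowerSeries.coeff_mul]
    exact Finset.sum_congr rfl fun y hy => by rw [coeff_phiFun, coeff_phiFun]
  rw [Finset.sum_congr rfl this, ← Finset.sum_product']
  refine Finset.sum_nbij' (i := fun z => ((z.1 a, z.2 a), (z.1 b, z.2 b)))
    (j := fun z => (Finsupp.single a z.1.1 + Finsupp.single b z.2.1,
                    Finsupp.single a z.1.2 + Finsupp.single b z.2.2))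
    ?_ ?_ ?_ ?_ ?_
  · intro x hx
    rw [Finset.HasAntidiagonal.mem_antidiagonal] at hx
    rw [Finset.mem_product, Finset.HasAntidiagonal.mem_antidiagonal, Finset.HasAntidiagonal.mem_antidiagonal]
    have ha := congrArg (fun m => m a) hx
    have hb := congrArg (fun m => m b) hx
    simp only [Finsupp.add_apply, Finsupp.single_apply, if_pos, Ne.symm hab, hab,
      if_neg, if_true, if_false, add_zero, zero_add] at ha hb
    exact ⟨ha, hb⟩
  · intro x hx
    rw [Finset.mem_product, Finset.HasAntidiagonal.mem_antidiagonal, Finset.HasAntidiagonal.mem_antidiagonal] at hx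
    rw [Finset.HasAntidiagonal.mem_antidiagonal]
    have h1 : Finsupp.single a x.1.1 + Finsupp.single a x.1.2 = Finsupp.single a n := by
      rw [← Finsupp.single_add, hx.1]
    have h2 : Finsupp.single b x.2.1 + Finsupp.single b x.2.2 = Finsupp.single b j := by
      rw [← Finsupp.single_add, hx.2]
    rw [← h1, ← h2]; dsimp only; abel
  · intro x hx
    have h1 := finsupp_fin2_decomp a b hab x.1
    have h2 := finsupp_fin2_decomp a b hab x.2
    exact Prod.ext h1.symm h2.symm
  · intro x hx
    obtain ⟨⟨p1, p2⟩, q1, q2⟩ := x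
    have s1 := single_add_single_apply a b hab p1 q1
    have s2 := single_add_single_apply a b hab p2 q2
    simp only [Prod.mk.injEq]
    exact ⟨⟨s1.1, s2.1⟩, s1.2, s2.2⟩
  · intro x hx
    rw [← finsupp_fin2_decomp a b hab x.1, ← finsupp_fin2_decomp a b hab x.2]


omit hab in
lemma phiFun_add (p q : PS) : phiFun a b (p + q) = phiFun a b p + phiFun a b q := by
  ext i j
  simp only [coeff_phiFun, map_add]

/-- The splitting ring isomorphism `PS ≃+* ℂ⟦X⟧⟦X⟧`. -/
def Phi : PS ≃+* W where
  toFun := phiFun a b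
  invFun := psiFun a b
  left_inv := psiFun_phiFun a b hab
  right_inv := phiFun_psiFun a b hab
  map_mul' := phiFun_mul a b hab
  map_add' := phiFun_add a b

lemma coeff_Phi (p : PS) (i j : ℕ) :
    PowerSeries.coeff (R := ℂ) j (PowerSeries.coeff (R := R1) i (Phi a b hab p)) =
      MvPowerSeries.coeff (R := ℂ) (Finsupp.single a i + Finsupp.single b j) p :=
  coeff_phiFun a b p i j

end
noncomputable section
open PowerSeries

lemma coeff_pd (i : Fin 2) (f : PS) (m : Fin 2 →₀ ℕ) :
    MvPowerSeries.coeff (R := ℂ) m (pd i f) =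
      ((m i : ℂ) + 1) * MvPowerSeries.coeff (R := ℂ) (m + Finsupp.single i 1) f := rfl

/-- coefficientwise derivative (with respect to the inner variable). -/
def D1 (P : W) : W := PowerSeries.mk fun i => derivativeFun (PowerSeries.coeff (R := R1) i P)

lemma coeff_D1 (P : W) (i : ℕ) :
    PowerSeries.coeff (R := R1) i (D1 P) = derivativeFun (PowerSeries.coeff (R := R1) i P) := by
  simp [D1]

variable (a b : Fin 2) (hab : a ≠ b)

lemma Phi_pd_outer (p : PS) :
    Phi a b hab (pd a p) = derivativeFun (Phi a b hab p) := by
  ext i j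
  rw [show ((Phi a b hab) (pd a p)) = phiFun a b (pd a p) from rfl, coeff_phiFun,
    coeff_derivativeFun', coeff_pd]
  have hmul : ((i : R1) + 1) = PowerSeries.C (R := ℂ) ((i : ℂ) + 1) := by
    rw [map_add, map_one, map_natCast]
  rw [hmul, PowerSeries.coeff_mul_C, coeff_Phi]
  rw [(single_add_single_apply a b hab i j).1]
  have harg : Finsupp.single a i + Finsupp.single b j + Finsupp.single a 1 =
      Finsupp.single a (i + 1) + Finsupp.single b j := by
    rw [Finsupp.single_add]; abel_nf
  rw [harg, mul_comm]

lemma Phi_pd_inner (p : PS) : Phi a b hab (pd b p) = D1 (Phi a b hab p) := by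
  ext i j
  rw [show ((Phi a b hab) (pd b p)) = phiFun a b (pd b p) from rfl, coeff_phiFun,
    coeff_D1, coeff_derivativeFun', coeff_Phi, coeff_pd]
  rw [(single_add_single_apply a b hab i j).2]
  have harg : Finsupp.single a i + Finsupp.single b j + Finsupp.single b 1 =
      Finsupp.single a i + Finsupp.single b (j + 1) := by
    rw [Finsupp.single_add]; abel_nf
  rw [harg, mul_comm]

lemma pd_add (i : Fin 2) (p q : PS) : pd i (p + q) = pd i p + pd i q := by
  ext m
  simp only [coeff_pd, map_add]
  ring

lemma fin2_other (i : Fin 2) : i ≠ 1 - i ∨ i ≠ 0 := by omega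

lemma pd_mul (i : Fin 2) (p q : PS) : pd i (p * q) = p * pd i q + q * pd i p := by
  have hne : i ≠ (1 - i : Fin 2) := by omega
  have h := Phi_pd_outer i (1 - i) hne (p * q)
  rw [map_mul, derivativeFun_mul, smul_eq_mul, smul_eq_mul, ← Phi_pd_outer, ← Phi_pd_outer,
    ← map_mul, ← map_mul, ← map_add] at h
  exact (Phi i (1-i) hne).injective h

lemma pd_comm (p : PS) : pd a (pd b p) = pd b (pd a p) := by
  ext m
  simp only [coeff_pd]
  rw [Finsupp.add_apply, Finsupp.add_apply, Finsupp.single_apply, Finsupp.single_apply]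
  have harg : m + Finsupp.single b 1 + Finsupp.single a 1 =
      m + Finsupp.single a 1 + Finsupp.single b 1 := by abel
  rw [harg]
  rcases eq_or_ne b a with rfl | h
  · ring
  · rw [if_neg h, if_neg (Ne.symm h)]; push_cast; ring

end
noncomputable section EV
open PowerSeries Finset

variable (ψ : R1)

/-- Evaluation of `P ∈ ℂ⟦X⟧⟦X⟧` at outer variable `= ψ` (of positive order). -/
def ev (P : W) : R1 :=
  PowerSeries.mk fun m => ∑ k ∈ range (m + 1),
    PowerSeries.coeff (R := ℂ) m (ψ ^ k * PowerSeries.coeff (R := R1) k P)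

variable (hψ : PowerSeries.constantCoeff (R := ℂ) ψ = 0)

include hψ

lemma coeff_pow_mul_eq_zero {k m : ℕ} (h : m < k) (r : R1) :
    PowerSeries.coeff (R := ℂ) m (ψ ^ k * r) = 0 := by
  have hd : (PowerSeries.X : R1) ^ k ∣ ψ ^ k * r :=
    Dvd.dvd.mul_right (pow_dvd_pow_of_dvd (PowerSeries.X_dvd_iff.mpr hψ) k) r
  exact (PowerSeries.X_pow_dvd_iff.mp hd) m h

lemma coeff_ev (P : W) {m N : ℕ} (hN : m < N) :
    PowerSeries.coeff (R := ℂ) m (ev ψ P) =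
      ∑ k ∈ range N, PowerSeries.coeff (R := ℂ) m (ψ ^ k * PowerSeries.coeff (R := R1) k P) := by
  rw [ev, PowerSeries.coeff_mk]
  rcases le_or_gt N (m + 1) with h | h
  · rw [← Finset.sum_range_add_sum_Ico _ h]
    have : ∀ k ∈ Finset.Ico N (m + 1),
        PowerSeries.coeff (R := ℂ) m (ψ ^ k * PowerSeries.coeff (R := R1) k P) = 0 := fun k hk =>
      coeff_pow_mul_eq_zero ψ hψ (lt_of_lt_of_le hN (Finset.mem_Ico.mp hk).1) _
    rw [Finset.sum_congr rfl this, Finset.sum_const_zero, add_zero]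
  · rw [← Finset.sum_range_add_sum_Ico _ h.le]
    have : ∀ k ∈ Finset.Ico (m + 1) N,
        PowerSeries.coeff (R := ℂ) m (ψ ^ k * PowerSeries.coeff (R := R1) k P) = 0 := fun k hk =>
      coeff_pow_mul_eq_zero ψ hψ (Finset.mem_Ico.mp hk).1 _
    rw [Finset.sum_congr rfl this, Finset.sum_const_zero, add_zero]

omit hψ in
lemma ev_add (P Q : W) : ev ψ (P + Q) = ev ψ P + ev ψ Q := by
  ext m
  simp only [ev, PowerSeries.coeff_mk, map_add, mul_add, ← Finset.sum_add_distrib]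

omit hψ in
lemma ev_C (r : R1) : ev ψ (PowerSeries.C (R := R1) r) = r := by
  ext m
  rw [ev, PowerSeries.coeff_mk]
  rw [Finset.sum_eq_single 0]
  · simp
  · intro k hk hk0
    rw [PowerSeries.coeff_C, if_neg hk0]
    simp
  · simp

omit hψ in
lemma ev_one : ev ψ (1 : W) = 1 := by
  have := ev_C ψ (1 : R1)
  rwa [map_one] at this

lemma ev_X : ev ψ (PowerSeries.X : W) = ψ := by
  ext m
  rw [ev, PowerSeries.coeff_mk, Finset.sum_eq_single 1]
  · simp
  · intro k hk hk1
    rw [PowerSeries.coeff_X, if_neg hk1, mul_zero, map_zero]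
  · intro hm
    rw [Finset.mem_range, not_lt] at hm
    have : m = 0 := by omega
    subst this
    simp [hψ]

omit hψ in
lemma coeff_zero_ev (P : W) :
    PowerSeries.coeff (R := ℂ) 0 (ev ψ P) =
      PowerSeries.coeff (R := ℂ) 0 (PowerSeries.coeff (R := R1) 0 P) := by
  rw [ev, PowerSeries.coeff_mk]
  simp

end EV
noncomputable section EVMUL
open PowerSeries Finset

variable (ψ : R1) (hψ : PowerSeries.constantCoeff (R := ℂ) ψ = 0)

include hψ

lemma ev_mul (P Q : W) : ev ψ (P * Q) = ev ψ P * ev ψ Q := by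
  ext m
  set G : ℕ × ℕ → ℂ := fun z =>
    PowerSeries.coeff (R := ℂ) m (ψ ^ (z.1 + z.2) *
      (PowerSeries.coeff (R := R1) z.1 P * PowerSeries.coeff (R := R1) z.2 Q)) with hG
  have hsquare : ∀ z : ℕ × ℕ, m < z.1 + z.2 → G z = 0 := fun z hz =>
    coeff_pow_mul_eq_zero ψ hψ hz _
  -- RHS
  have hR : PowerSeries.coeff (R := ℂ) m (ev ψ P * ev ψ Q) =
      ∑ z ∈ range (m + 1) ×ˢ range (m + 1), G z := by
    rw [PowerSeries.coeff_mul]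
    have step : ∀ x ∈ antidiagonal m,
        PowerSeries.coeff (R := ℂ) x.1 (ev ψ P) * PowerSeries.coeff (R := ℂ) x.2 (ev ψ Q) =
        ∑ z ∈ range (m + 1) ×ˢ range (m + 1),
          PowerSeries.coeff (R := ℂ) x.1 (ψ ^ z.1 * PowerSeries.coeff (R := R1) z.1 P) *
          PowerSeries.coeff (R := ℂ) x.2 (ψ ^ z.2 * PowerSeries.coeff (R := R1) z.2 Q) := by
      intro x hx
      rw [Finset.HasAntidiagonal.mem_antidiagonal] at hx
      rw [coeff_ev ψ hψ P (N := m + 1) (by omega), coeff_ev ψ hψ Q (N := m + 1) (by omega),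
        Finset.sum_mul_sum, ← Finset.sum_product']
    rw [Finset.sum_congr rfl step, Finset.sum_comm]
    refine Finset.sum_congr rfl fun z _ => ?_
    rw [← PowerSeries.coeff_mul]
    congr 1
    rw [pow_add]; ring
  -- LHS
  have hL : PowerSeries.coeff (R := ℂ) m (ev ψ (P * Q)) =
      ∑ z ∈ (range (m + 1) ×ˢ range (m + 1)).filter (fun z => z.1 + z.2 ≤ m), G z := by
    rw [coeff_ev ψ hψ _ (N := m + 1) (by omega)]
    have step : ∀ k ∈ range (m + 1),
        PowerSeries.coeff (R := ℂ) m (ψ ^ k * PowerSeries.coeff (R := R1) k (P * Q)) =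
        ∑ x ∈ antidiagonal k,
          PowerSeries.coeff (R := ℂ) m (ψ ^ k *
            (PowerSeries.coeff (R := R1) x.1 P * PowerSeries.coeff (R := R1) x.2 Q)) := by
      intro k _
      rw [show PowerSeries.coeff (R := R1) k (P * Q) =
          ∑ x ∈ antidiagonal k, PowerSeries.coeff (R := R1) x.1 P * PowerSeries.coeff (R := R1) x.2 Q
        from PowerSeries.coeff_mul k P Q, Finset.mul_sum, map_sum]
    rw [Finset.sum_congr rfl step, Finset.sum_sigma']
    refine Finset.sum_nbij' (i := fun y => (y.2.1, y.2.2)) (j := fun z => ⟨z.1 + z.2, z⟩)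
      ?_ ?_ ?_ ?_ ?_
    · rintro ⟨k, x1, x2⟩ hy
      simp only [Finset.mem_sigma, Finset.mem_range, Finset.HasAntidiagonal.mem_antidiagonal] at hy
      simp only [Finset.mem_filter, Finset.mem_product, Finset.mem_range]
      omega
    · intro z hz
      simp only [Finset.mem_filter, Finset.mem_product, Finset.mem_range] at hz
      simp only [Finset.mem_sigma, Finset.mem_range, Finset.HasAntidiagonal.mem_antidiagonal]
      exact ⟨by omega, trivial⟩
    · rintro ⟨k, x1, x2⟩ hy
      simp only [Finset.mem_sigma, Finset.mem_range, Finset.HasAntidiagonal.mem_antidiagonal] at hy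
      obtain ⟨-, h2⟩ := hy
      subst h2
      rfl
    · intro z hz; rfl
    · rintro ⟨k, x1, x2⟩ hy
      simp only [Finset.mem_sigma, Finset.mem_range, Finset.HasAntidiagonal.mem_antidiagonal] at hy
      obtain ⟨-, h2⟩ := hy
      subst h2
      rfl
  -- combine
  rw [hL, hR, ← Finset.sum_filter_add_sum_filter_not (range (m+1) ×ˢ range (m+1))
    (fun z => z.1 + z.2 ≤ m) G]
  have : ∀ z ∈ (range (m + 1) ×ˢ range (m + 1)).filter (fun z => ¬ z.1 + z.2 ≤ m),
      G z = 0 := by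
    intro z hz
    rw [Finset.mem_filter] at hz
    exact hsquare z (by omega)
  rw [Finset.sum_congr rfl this, Finset.sum_const_zero, add_zero]

end EVMUL
noncomputable section ODE
open PowerSeries Finset

lemma coeff_ev_default (ψ : R1) (P : W) (m : ℕ) :
    PowerSeries.coeff (R := ℂ) m (ev ψ P) =
      ∑ k ∈ range (m + 1), PowerSeries.coeff (R := ℂ) m (ψ ^ k * PowerSeries.coeff (R := R1) k P) := by
  rw [ev, PowerSeries.coeff_mk]

lemma coeff_ev_congr {ψ ψ' : R1} {n : ℕ} (h : ∀ k ≤ n, PowerSeries.coeff (R := ℂ) k ψ = PowerSeries.coeff (R := ℂ) k ψ')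
    (P : W) {m : ℕ} (hm : m ≤ n) :
    PowerSeries.coeff (R := ℂ) m (ev ψ P) = PowerSeries.coeff (R := ℂ) m (ev ψ' P) := by
  rw [coeff_ev_default, coeff_ev_default]
  refine Finset.sum_congr rfl fun k _ => ?_
  have hdvd : (PowerSeries.X : R1) ^ (n + 1) ∣ ψ' - ψ := by
    rw [PowerSeries.X_pow_dvd_iff]
    intro i hi
    rw [map_sub, h i (by omega), sub_self]
  have hdvd2 : (PowerSeries.X : R1) ^ (n + 1) ∣ (ψ' ^ k - ψ ^ k) * PowerSeries.coeff (R := R1) k P :=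
    (hdvd.trans (sub_dvd_pow_sub_pow ψ' ψ k)).mul_right _
  have hz : PowerSeries.coeff (R := ℂ) m ((ψ' ^ k - ψ ^ k) * PowerSeries.coeff (R := R1) k P) = 0 :=
    (PowerSeries.X_pow_dvd_iff.mp hdvd2) m (by omega)
  rw [sub_mul, map_sub] at hz
  exact (sub_eq_zero.mp hz).symm

lemma ode_unique (c F : R1) (h : derivativeFun F = c * F)
    (h0 : PowerSeries.coeff (R := ℂ) 0 F = 0) : F = 0 := by
  ext n
  induction n using Nat.strong_induction_on with
  | _ n ih =>
    match n with
    | 0 => simpa using h0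
    | n + 1 =>
      have hc : PowerSeries.coeff (R := ℂ) n (derivativeFun F) = PowerSeries.coeff (R := ℂ) n (c * F) := by
        rw [h]
      rw [coeff_derivativeFun', PowerSeries.coeff_mul] at hc
      have : ∀ x ∈ antidiagonal n, PowerSeries.coeff (R := ℂ) x.1 c * PowerSeries.coeff (R := ℂ) x.2 F = 0 := by
        intro x hx
        rw [Finset.HasAntidiagonal.mem_antidiagonal] at hx
        rw [show PowerSeries.coeff (R := ℂ) x.2 F = 0 from by simpa using ih x.2 (by omega), mul_zero]
      rw [Finset.sum_congr rfl this, Finset.sum_const_zero] at hc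
      have hne : ((n : ℂ) + 1) ≠ 0 := by exact_mod_cast Nat.succ_ne_zero n
      have := mul_eq_zero.mp hc
      simp only [map_zero]
      tauto

/-- Coefficients of the solution of `ψ' = G(ψ(y), y)`, `ψ(0) = 0`. -/
noncomputable def odeC (G : W) (n : ℕ) : ℂ :=
  if n = 0 then 0 else
    (n : ℂ)⁻¹ * PowerSeries.coeff (R := ℂ) (n - 1)
      (ev (PowerSeries.mk fun k => if h : k < n then odeC G k else 0) G)
termination_by n
decreasing_by exact h

lemma ode_exists (G : W) : ∃ ψ : R1, PowerSeries.constantCoeff (R := ℂ) ψ = 0 ∧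
    derivativeFun ψ = ev ψ G := by
  refine ⟨PowerSeries.mk (odeC G), ?_, ?_⟩
  · have : odeC G 0 = 0 := by rw [odeC]; simp
    simpa [PowerSeries.coeff_zero_eq_constantCoeff] using this
  · ext n
    rw [coeff_derivativeFun', PowerSeries.coeff_mk]
    have hrec : odeC G (n + 1) = ((n : ℂ) + 1)⁻¹ * PowerSeries.coeff (R := ℂ) n
        (ev (PowerSeries.mk fun k => if k < n + 1 then odeC G k else 0) G) := by
      rw [odeC]
      simp only [Nat.add_sub_cancel, Nat.succ_ne_zero, if_false]
      push_cast
      congr 1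
    have hcongr : PowerSeries.coeff (R := ℂ) n
        (ev (PowerSeries.mk fun k => if k < n + 1 then odeC G k else 0) G) =
        PowerSeries.coeff (R := ℂ) n (ev (PowerSeries.mk (odeC G)) G) := by
      refine coeff_ev_congr (fun k hk => ?_) G (le_refl n)
      rw [PowerSeries.coeff_mk, PowerSeries.coeff_mk, if_pos (by omega)]
    rw [hrec, hcongr]
    have hne : ((n : ℂ) + 1) ≠ 0 := by exact_mod_cast Nat.succ_ne_zero n
    field_simp

end ODE
noncomputable section FACTOR
open PowerSeries Finset

def shf (P : W) : W := PowerSeries.mk fun k => PowerSeries.coeff (R := R1) (k + 1) P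

lemma coeff_shf_iter (P : W) (i k : ℕ) :
    PowerSeries.coeff (R := R1) k (shf^[i] P) = PowerSeries.coeff (R := R1) (k + i) P := by
  induction i generalizing P with
  | zero => rfl
  | succ n ih =>
    rw [Function.iterate_succ_apply, ih, shf, PowerSeries.coeff_mk, Nat.add_assoc]

lemma decomp_shf (P : W) : P = PowerSeries.C (R := R1) (PowerSeries.coeff (R := R1) 0 P) + (PowerSeries.X : W) * shf P := by
  refine PowerSeries.ext fun i => ?_
  cases i with
  | zero => simp [shf, PowerSeries.coeff_zero_X_mul, PowerSeries.coeff_C]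
  | succ n => simp [PowerSeries.coeff_succ_X_mul, shf, PowerSeries.coeff_C]

variable (ψ : R1) (hψ : PowerSeries.constantCoeff (R := ℂ) ψ = 0)

include hψ

lemma ev_shf (P : W) : ev ψ P = PowerSeries.coeff (R := R1) 0 P + ψ * ev ψ (shf P) := by
  conv_lhs => rw [decomp_shf P]
  rw [ev_add, ev_mul ψ hψ, ev_X ψ hψ, ev_C]

lemma key_div (P : W) :
    ((PowerSeries.X : W) - PowerSeries.C (R := R1) ψ) * (PowerSeries.mk fun i => ev ψ (shf^[i + 1] P)) =
      P - PowerSeries.C (R := R1) (ev ψ P) := by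
  refine PowerSeries.ext fun i => ?_
  rw [sub_mul, map_sub, map_sub]
  cases i with
  | zero =>
    rw [PowerSeries.coeff_zero_X_mul, PowerSeries.coeff_C_mul, PowerSeries.coeff_mk,
      PowerSeries.coeff_C, if_pos rfl]
    have h0 := ev_shf ψ hψ P
    rw [show shf^[0 + 1] P = shf P from by rw [Function.iterate_one]]
    rw [h0]
    ring
  | succ n =>
    rw [PowerSeries.coeff_succ_X_mul, PowerSeries.coeff_C_mul, PowerSeries.coeff_mk,
      PowerSeries.coeff_mk, PowerSeries.coeff_C, if_neg (Nat.succ_ne_zero n), sub_zero]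
    have h1 : ev ψ (shf^[n + 1] P) =
        PowerSeries.coeff (R := R1) 0 (shf^[n + 1] P) + ψ * ev ψ (shf (shf^[n + 1] P)) :=
      ev_shf ψ hψ _
    rw [← Function.iterate_succ_apply' shf (n + 1) P] at h1
    rw [coeff_shf_iter, zero_add] at h1
    rw [h1]
    ring

lemma factor_of_ev_zero (P : W) (h : ev ψ P = 0) :
    ∃ Q : W, P = ((PowerSeries.X : W) - PowerSeries.C (R := R1) ψ) * Q := by
  refine ⟨PowerSeries.mk fun i => ev ψ (shf^[i + 1] P), ?_⟩
  rw [key_div ψ hψ P, h, map_zero, sub_zero]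

end FACTOR
noncomputable section CHAIN
open PowerSeries Finset

lemma dY_sum {α : Type*} (s : Finset α) (f : α → R1) :
    derivativeFun (∑ x ∈ s, f x) = ∑ x ∈ s, derivativeFun (f x) :=
  map_sum (Derivation.toLinearMap (derivative ℂ)) f s

lemma dY_pow (r : R1) (k : ℕ) :
    derivativeFun (r ^ (k + 1)) = (((k + 1 : ℕ)) : R1) * r ^ k * derivativeFun r := by
  induction k with
  | zero => simp [pow_one]
  | succ n ih =>
    rw [pow_succ, derivativeFun_mul, ih, smul_eq_mul, smul_eq_mul]
    push_cast
    ring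

lemma coeff_mul_congr {r r' s : R1} {m : ℕ}
    (h : ∀ u ≤ m, PowerSeries.coeff (R := ℂ) u r = PowerSeries.coeff (R := ℂ) u r') :
    PowerSeries.coeff (R := ℂ) m (r * s) = PowerSeries.coeff (R := ℂ) m (r' * s) := by
  rw [PowerSeries.coeff_mul, PowerSeries.coeff_mul]
  refine Finset.sum_congr rfl fun x hx => ?_
  rw [Finset.HasAntidiagonal.mem_antidiagonal] at hx
  rw [h x.1 (by omega)]

lemma ev_chain (ψ : R1) (hψ : PowerSeries.constantCoeff (R := ℂ) ψ = 0) (P : W) :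
    derivativeFun (ev ψ P) =
      ev ψ (derivativeFun P) * derivativeFun ψ + ev ψ (D1 P) := by
  ext m
  have hL : PowerSeries.coeff (R := ℂ) m (derivativeFun (ev ψ P)) =
      PowerSeries.coeff (R := ℂ) m
        (derivativeFun (∑ k ∈ range (m + 2), ψ ^ k * PowerSeries.coeff (R := R1) k P)) := by
    rw [coeff_derivativeFun', coeff_derivativeFun', coeff_ev_default, map_sum]
  have hT : derivativeFun (∑ k ∈ range (m + 2), ψ ^ k * PowerSeries.coeff (R := R1) k P) =
      (∑ k ∈ range (m + 1), ψ ^ k * (PowerSeries.coeff (R := R1) (k + 1) P * (((k + 1 : ℕ)) : R1)))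
        * derivativeFun ψ
      + ∑ k ∈ range (m + 2), ψ ^ k * derivativeFun (PowerSeries.coeff (R := R1) k P) := by
    rw [dY_sum]
    have step : ∀ k ∈ range (m + 2),
        derivativeFun (ψ ^ k * PowerSeries.coeff (R := R1) k P) =
          derivativeFun (ψ ^ k) * PowerSeries.coeff (R := R1) k P
          + ψ ^ k * derivativeFun (PowerSeries.coeff (R := R1) k P) := by
      intro k _
      rw [derivativeFun_mul, smul_eq_mul, smul_eq_mul]
      ring
    rw [Finset.sum_congr rfl step, Finset.sum_add_distrib]
    congr 1
    rw [Finset.sum_range_succ' (fun k => derivativeFun (ψ ^ k) * PowerSeries.coeff (R := R1) k P) (m + 1)]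
    rw [show derivativeFun (ψ ^ 0) * PowerSeries.coeff (R := R1) 0 P = 0 by
      rw [pow_zero, derivativeFun_one, zero_mul]]
    rw [add_zero, Finset.sum_mul]
    refine Finset.sum_congr rfl fun k _ => ?_
    rw [dY_pow]
    ring
  have hR1 : PowerSeries.coeff (R := ℂ) m (ev ψ (derivativeFun P) * derivativeFun ψ) =
      PowerSeries.coeff (R := ℂ) m
        ((∑ k ∈ range (m + 1), ψ ^ k * (PowerSeries.coeff (R := R1) (k + 1) P * (((k + 1 : ℕ)) : R1)))
          * derivativeFun ψ) := by
    refine coeff_mul_congr fun u hu => ?_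
    rw [coeff_ev ψ hψ _ (N := m + 1) (by omega), map_sum]
    refine Finset.sum_congr rfl fun k _ => ?_
    rw [coeff_derivativeFun']
    push_cast
    rfl
  have hR2 : PowerSeries.coeff (R := ℂ) m (ev ψ (D1 P)) =
      PowerSeries.coeff (R := ℂ) m
        (∑ k ∈ range (m + 2), ψ ^ k * derivativeFun (PowerSeries.coeff (R := R1) k P)) := by
    rw [coeff_ev ψ hψ _ (N := m + 2) (by omega), map_sum]
    refine Finset.sum_congr rfl fun k _ => ?_
    rw [coeff_D1]
  rw [map_add, hL, hT, map_add, hR1, hR2]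

end CHAIN
noncomputable section MAIN
open PowerSeries Finset

lemma ev_zero (ψ : R1) : ev ψ (0 : W) = 0 := by
  have := ev_C ψ (0 : R1)
  rwa [map_zero] at this

lemma ev_neg (ψ : R1) (P : W) : ev ψ (-P) = - ev ψ P := by
  have h := ev_add ψ P (-P)
  rw [add_neg_cancel, ev_zero] at h
  linear_combination -h

lemma ev_sub (ψ : R1) (P Q : W) : ev ψ (P - Q) = ev ψ P - ev ψ Q := by
  rw [sub_eq_add_neg, ev_add, ev_neg, sub_eq_add_neg]

lemma D0_D1_comm (P : W) : derivativeFun (D1 P) = D1 (derivativeFun P) := by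
  have hab : (0 : Fin 2) ≠ 1 := by omega
  set p := (Phi 0 1 hab).symm P with hp
  have hP : P = Phi 0 1 hab p := by rw [hp, RingEquiv.apply_symm_apply]
  rw [hP, ← Phi_pd_inner, ← Phi_pd_outer, ← Phi_pd_outer, ← Phi_pd_inner, pd_comm]

lemma D0_sub (P Q : W) : derivativeFun (P - Q) = derivativeFun P - derivativeFun Q := by
  refine PowerSeries.ext fun n => ?_
  rw [coeff_derivativeFun', map_sub, map_sub, coeff_derivativeFun', coeff_derivativeFun']
  ring

lemma D0_X : derivativeFun (PowerSeries.X : W) = 1 := by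
  refine PowerSeries.ext fun n => ?_
  rw [coeff_derivativeFun', PowerSeries.coeff_X, PowerSeries.coeff_one]
  cases n with
  | zero => simp
  | succ k => simp [Nat.succ_ne_zero]
    

lemma main_W (F 𝔸 𝔹 H 𝔸' : W)
    (heq : 𝔸 * D1 F - 𝔹 * derivativeFun F = H * F)
    (hA : 𝔸 * 𝔸' = 1)
    (h00 : PowerSeries.coeff (R := ℂ) 0 (PowerSeries.coeff (R := R1) 0 F) = 0)
    (h10 : PowerSeries.coeff (R := ℂ) 0 (PowerSeries.coeff (R := R1) 1 F) = 0) :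
    ∃ g Q : W, F = g * g * Q ∧ PowerSeries.coeff (R := ℂ) 0 (PowerSeries.coeff (R := R1) 0 g) = 0 := by
  obtain ⟨ψ, hψ0, hψode⟩ := ode_exists (-(𝔹 * 𝔸'))
  have evInv : ev ψ 𝔸 * ev ψ 𝔸' = 1 := by rw [← ev_mul ψ hψ0, hA, ev_one]
  have key : ev ψ 𝔸 * derivativeFun ψ = - ev ψ 𝔹 := by
    rw [hψode, ev_neg, ev_mul ψ hψ0]
    calc ev ψ 𝔸 * -(ev ψ 𝔹 * ev ψ 𝔸') = -(ev ψ 𝔹 * (ev ψ 𝔸 * ev ψ 𝔸')) := by ring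
    _ = - ev ψ 𝔹 := by rw [evInv, mul_one]
  -- apply ev to the main equation
  have heqe : ev ψ 𝔸 * ev ψ (D1 F) - ev ψ 𝔹 * ev ψ (derivativeFun F) =
      ev ψ H * ev ψ F := by
    rw [← ev_mul ψ hψ0, ← ev_mul ψ hψ0, ← ev_sub, heq, ev_mul ψ hψ0]
  -- F₀ := ev ψ F vanishes
  have hF0 : ev ψ F = 0 := by
    apply ode_unique (ev ψ 𝔸' * ev ψ H)
    · have hchain := ev_chain ψ hψ0 F
      have h1 : ev ψ 𝔸 * derivativeFun (ev ψ F) = ev ψ H * ev ψ F := by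
        rw [hchain]
        calc ev ψ 𝔸 * (ev ψ (derivativeFun F) * derivativeFun ψ + ev ψ (D1 F))
            = ev ψ (derivativeFun F) * (ev ψ 𝔸 * derivativeFun ψ) +
              ev ψ 𝔸 * ev ψ (D1 F) := by ring
        _ = ev ψ 𝔸 * ev ψ (D1 F) - ev ψ 𝔹 * ev ψ (derivativeFun F) := by rw [key]; ring
        _ = ev ψ H * ev ψ F := heqe
      have h2 := congrArg (fun z => ev ψ 𝔸' * z) h1
      calc derivativeFun (ev ψ F) = (ev ψ 𝔸' * ev ψ 𝔸) * derivativeFun (ev ψ F) := by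
            rw [mul_comm (ev ψ 𝔸'), evInv, one_mul]
      _ = ev ψ 𝔸' * ev ψ H * ev ψ F := by rw [mul_assoc, h2]; ring
    · rw [coeff_zero_ev]; exact h00
  -- differentiate the main equation with respect to the outer variable
  have heqD : 𝔸 * derivativeFun (D1 F) + D1 F * derivativeFun 𝔸
      - (𝔹 * derivativeFun (derivativeFun F) + derivativeFun F * derivativeFun 𝔹)
      = H * derivativeFun F + F * derivativeFun H := by
    have := congrArg derivativeFun heq
    rw [D0_sub, derivativeFun_mul, derivativeFun_mul, derivativeFun_mul] at this
    rw [smul_eq_mul, smul_eq_mul, smul_eq_mul, smul_eq_mul, smul_eq_mul, smul_eq_mul] at this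
    calc _ = 𝔸 * derivativeFun (D1 F) + D1 F * derivativeFun 𝔸
          - (𝔹 * derivativeFun (derivativeFun F) + derivativeFun F * derivativeFun 𝔹) := rfl
    _ = H * derivativeFun F + F * derivativeFun H := by
        rw [show 𝔸 * derivativeFun (D1 F) + D1 F * derivativeFun 𝔸
          - (𝔹 * derivativeFun (derivativeFun F) + derivativeFun F * derivativeFun 𝔹)
          = H * derivativeFun F + F * derivativeFun H from by linear_combination this]
  -- F₁ := ev ψ (D0 F) vanishes
  have hD1F : ev ψ (D1 F) = ev ψ 𝔸' * ev ψ 𝔹 * ev ψ (derivativeFun F) := by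
    have h0 : ev ψ 𝔸 * ev ψ (D1 F) - ev ψ 𝔹 * ev ψ (derivativeFun F) = 0 := by
      rw [heqe, hF0, mul_zero]
    linear_combination ev ψ 𝔸' * h0 - ev ψ (D1 F) * evInv
  have e3 : ev ψ 𝔸 * ev ψ (derivativeFun (D1 F)) + ev ψ (D1 F) * ev ψ (derivativeFun 𝔸)
      - (ev ψ 𝔹 * ev ψ (derivativeFun (derivativeFun F))
        + ev ψ (derivativeFun F) * ev ψ (derivativeFun 𝔹))
      = ev ψ H * ev ψ (derivativeFun F) := by
    have := congrArg (ev ψ) heqD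
    rw [ev_sub, ev_add, ev_add, ev_add, ev_mul ψ hψ0, ev_mul ψ hψ0, ev_mul ψ hψ0,
      ev_mul ψ hψ0, ev_mul ψ hψ0, ev_mul ψ hψ0, hF0, zero_mul, add_zero] at this
    exact this
  have hF1 : ev ψ (derivativeFun F) = 0 := by
    apply ode_unique (ev ψ 𝔸' * (ev ψ H + ev ψ (derivativeFun 𝔹)
      - ev ψ 𝔸' * ev ψ 𝔹 * ev ψ (derivativeFun 𝔸)))
    · have chain := ev_chain ψ hψ0 (derivativeFun F)
      rw [← D0_D1_comm F] at chain
      have step1 : ev ψ 𝔸 * derivativeFun (ev ψ (derivativeFun F)) =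
          (ev ψ H + ev ψ (derivativeFun 𝔹) - ev ψ 𝔸' * ev ψ 𝔹 * ev ψ (derivativeFun 𝔸))
            * ev ψ (derivativeFun F) := by
        rw [chain]
        linear_combination e3 + ev ψ (derivativeFun (derivativeFun F)) * key
          - ev ψ (derivativeFun 𝔸) * hD1F
      linear_combination ev ψ 𝔸' * step1 - derivativeFun (ev ψ (derivativeFun F)) * evInv
    · rw [coeff_zero_ev, coeff_derivativeFun']
      simpa using h10
  -- factor twice
  obtain ⟨Q, hQ⟩ := factor_of_ev_zero ψ hψ0 F hF0
  have evg : ev ψ ((PowerSeries.X : W) - PowerSeries.C (R := R1) ψ) = 0 := by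
    rw [ev_sub, ev_X ψ hψ0, ev_C, sub_self]
  have hDF : derivativeFun F = Q + ((PowerSeries.X : W) - PowerSeries.C (R := R1) ψ)
      * derivativeFun Q := by
    rw [hQ, derivativeFun_mul, smul_eq_mul, smul_eq_mul, D0_sub, D0_X, derivativeFun_C',
      sub_zero, mul_one]
    ring
  have evQ : ev ψ Q = 0 := by
    have := congrArg (ev ψ) hDF
    rw [hF1, ev_add, ev_mul ψ hψ0, evg, zero_mul, add_zero] at this
    exact this.symm
  obtain ⟨Q₂, hQ₂⟩ := factor_of_ev_zero ψ hψ0 Q evQ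
  refine ⟨(PowerSeries.X : W) - PowerSeries.C (R := R1) ψ, Q₂, ?_, ?_⟩
  · rw [hQ, hQ₂]; ring
  · simp [PowerSeries.coeff_X, PowerSeries.coeff_C, hψ0]

end MAIN
noncomputable section FINAL
open PowerSeries Finset

lemma saito_A_const_zero (a b : Fin 2) (hab : a ≠ b) (f A B h : PS)
    (hsq : Squarefree f)
    (hlow : ∀ m : Fin 2 →₀ ℕ, m a + m b ≤ 1 → MvPowerSeries.coeff (R := ℂ) m f = 0)
    (heq : A * pd b f - B * pd a f = h * f) :
    MvPowerSeries.constantCoeff (σ := Fin 2) (R := ℂ) A = 0 := by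
  by_contra hA0
  have heqW : Phi a b hab A * D1 (Phi a b hab f)
      - Phi a b hab B * derivativeFun (Phi a b hab f)
      = Phi a b hab h * Phi a b hab f := by
    have hc := congrArg (Phi a b hab) heq
    rw [map_sub, map_mul, map_mul, map_mul, Phi_pd_inner, Phi_pd_outer] at hc
    exact hc
  have hAunit : IsUnit (Phi a b hab A) := by
    refine IsUnit.map (Phi a b hab) ?_
    rw [MvPowerSeries.isUnit_iff_constantCoeff]
    exact isUnit_iff_ne_zero.mpr hA0
  obtain ⟨u, hu⟩ := hAunit
  have hAA' : Phi a b hab A * ((u⁻¹ : Wˣ) : W) = 1 := by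
    rw [← hu]; exact u.mul_inv
  have h00 : PowerSeries.coeff (R := ℂ) 0 (PowerSeries.coeff (R := R1) 0 (Phi a b hab f)) = 0 := by
    rw [coeff_Phi]
    refine hlow _ ?_
    simp
  have h10 : PowerSeries.coeff (R := ℂ) 0 (PowerSeries.coeff (R := R1) 1 (Phi a b hab f)) = 0 := by
    rw [coeff_Phi]
    refine hlow _ ?_
    simp [Finsupp.single_apply, hab, Ne.symm hab]
  obtain ⟨g, Q, hgQ, hg0⟩ := main_W (Phi a b hab f) (Phi a b hab A) (Phi a b hab B)
    (Phi a b hab h) ((u⁻¹ : Wˣ) : W) heqW hAA' h00 h10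
  have hsymm : f = (Phi a b hab).symm g * (Phi a b hab).symm g * (Phi a b hab).symm Q := by
    have hc := congrArg (Phi a b hab).symm hgQ
    rwa [RingEquiv.symm_apply_apply, map_mul, map_mul] at hc
  have hdvd : (Phi a b hab).symm g * (Phi a b hab).symm g ∣ f := ⟨(Phi a b hab).symm Q, hsymm⟩
  have hgunit : IsUnit g := by
    have h1 := (hsq _ hdvd).map (Phi a b hab)
    rwa [RingEquiv.apply_symm_apply] at h1
  have h2 : IsUnit (PowerSeries.constantCoeff (R := ℂ) (PowerSeries.constantCoeff (R := R1) g)) :=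
    (hgunit.map (PowerSeries.constantCoeff (R := R1))).map (PowerSeries.constantCoeff (R := ℂ))
  rw [← PowerSeries.coeff_zero_eq_constantCoeff_apply, ← PowerSeries.coeff_zero_eq_constantCoeff_apply,
    hg0] at h2
  exact not_isUnit_zero h2

end FINAL
noncomputable section THM
open Finset

theorem saito_basis_with_df (f : PS) (hf : Squarefree f)
    (hmult : f ∈ (Ideal.span {(X 0 : PS), X 1}) ^ 2) :
    (∀ ω : PS × PS, ∀ h : PS, wedge ω (dd f) = h * f → IsUnit h →
        ∃ u : PS, IsUnit u ∧ wedge ω (dd f) = u * f) ∧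
    (∀ A B C D h₁ u : PS, IsUnit u →
        wedge (A, B) (h₁ • dd f + f • ((C, D) : PS × PS)) = u * f →
        (A, B) ∈ SaitoSet f →
        ∃ h : PS, wedge (A, B) (dd f) = h * f ∧ IsUnit h) := by
  constructor
  · intro ω h hw hu
    exact ⟨h, hu, hw⟩
  · intro A B C D h₁ u hu hyp hS
    -- f ≠ 0
    have hf0 : f ≠ 0 := by
      rintro rfl
      have hX := hf (MvPowerSeries.X 0) (dvd_zero _)
      rw [MvPowerSeries.isUnit_iff_constantCoeff, MvPowerSeries.constantCoeff_X] at hX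
      exact not_isUnit_zero hX
    -- low coefficients of f vanish
    have hlow : ∀ m : Fin 2 →₀ ℕ, m 0 + m 1 ≤ 1 → MvPowerSeries.coeff (R := ℂ) m f = 0 := by
      rw [pow_two] at hmult
      refine Submodule.mul_induction_on
        (C := fun x => ∀ m : Fin 2 →₀ ℕ, m 0 + m 1 ≤ 1 → MvPowerSeries.coeff (R := ℂ) m x = 0)
        hmult ?_ ?_
      · intro p hp q hq m hm
        have hp0 : MvPowerSeries.constantCoeff (σ := Fin 2) (R := ℂ) p = 0 := by
          obtain ⟨c, d, hcd⟩ := Ideal.mem_span_pair.mp hp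
          rw [← hcd, map_add, map_mul, map_mul, MvPowerSeries.constantCoeff_X,
            MvPowerSeries.constantCoeff_X, mul_zero, mul_zero, add_zero]
        have hq0 : MvPowerSeries.constantCoeff (σ := Fin 2) (R := ℂ) q = 0 := by
          obtain ⟨c, d, hcd⟩ := Ideal.mem_span_pair.mp hq
          rw [← hcd, map_add, map_mul, map_mul, MvPowerSeries.constantCoeff_X,
            MvPowerSeries.constantCoeff_X, mul_zero, mul_zero, add_zero]
        rw [MvPowerSeries.coeff_mul]
        refine Finset.sum_eq_zero fun x hx => ?_
        rw [Finset.HasAntidiagonal.mem_antidiagonal] at hx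
        have hzero : x.1 = 0 ∨ x.2 = 0 := by
          by_contra hcon
          push_neg at hcon
          obtain ⟨i, hi⟩ := Finsupp.ne_iff.mp hcon.1
          obtain ⟨j, hj⟩ := Finsupp.ne_iff.mp hcon.2
          have e0 := congrArg (fun z => z 0) hx
          have e1 := congrArg (fun z => z 1) hx
          simp only [Finsupp.add_apply, Finsupp.coe_zero, Pi.zero_apply] at e0 e1 hi hj
          rcases fin2_eq_or 0 1 i (by omega) with rfl | rfl <;>
            rcases fin2_eq_or 0 1 j (by omega) with rfl | rfl <;> omega
        rcases hzero with h0 | h0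
        · rw [h0, MvPowerSeries.coeff_zero_eq_constantCoeff_apply, hp0, zero_mul]
        · rw [h0, MvPowerSeries.coeff_zero_eq_constantCoeff_apply, hq0, mul_zero]
      · intro x y hx hy m hm
        rw [map_add, hx m hm, hy m hm, add_zero]
    -- the Saito cofactor
    obtain ⟨h₀, hh₀⟩ := hS
    refine ⟨h₀, hh₀, ?_⟩
    have hw0 : A * pd 1 f - B * pd 0 f = h₀ * f := hh₀
    -- expand the hypothesis
    have hyp' : A * (h₁ * pd 1 f + f * D) - B * (h₁ * pd 0 f + f * C) = u * f := by
      have : wedge (A, B) (h₁ • dd f + f • ((C, D) : PS × PS)) =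
          A * (h₁ * pd 1 f + f * D) - B * (h₁ * pd 0 f + f * C) := by
        simp [wedge, dd, Prod.smul_mk, smul_eq_mul, Prod.mk_add_mk]
      rwa [this] at hyp
    -- cancellation
    have hcancel : h₁ * h₀ + (A * D - B * C) = u := by
      have hmul : (h₁ * h₀ + (A * D - B * C)) * f = u * f := by
        linear_combination hyp' + h₁ * hw0.symm
      exact mul_right_cancel₀ hf0 hmul
    -- constant coefficients of A and B vanish
    have hA0 : MvPowerSeries.constantCoeff (σ := Fin 2) (R := ℂ) A = 0 :=
      saito_A_const_zero 0 1 (by omega) f A B h₀ hf hlow hw0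
    have hB0 : MvPowerSeries.constantCoeff (σ := Fin 2) (R := ℂ) B = 0 := by
      have hswap : (-B) * pd 0 f - (-A) * pd 1 f = h₀ * f := by linear_combination hw0
      have := saito_A_const_zero 1 0 (by omega) f (-B) (-A) h₀ hf
        (fun m hm => hlow m (by omega)) hswap
      rw [map_neg, neg_eq_zero] at this
      exact this
    -- conclude h₀ is a unit
    have hu0 : MvPowerSeries.constantCoeff (σ := Fin 2) (R := ℂ) u ≠ 0 := by
      intro hz
      have := hu.map (MvPowerSeries.constantCoeff (σ := Fin 2) (R := ℂ))
      rw [hz] at this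
      exact not_isUnit_zero this
    have hcc := congrArg (MvPowerSeries.constantCoeff (σ := Fin 2) (R := ℂ)) hcancel
    rw [map_add, map_mul, map_sub, map_mul, map_mul, hA0, hB0, zero_mul, zero_mul,
      sub_zero, add_zero] at hcc
    rw [MvPowerSeries.isUnit_iff_constantCoeff]
    refine isUnit_iff_ne_zero.mpr fun hz => hu0 ?_
    rw [← hcc, hz, mul_zero]

end THM
end
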